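/- arXiv:2403.00130 — 6 statements merged into one kernel-verified Lean document; each statement's English description precedes it below -/
import Mathlib

section
/- For positive integers $n,k$, permutations $\sigma \in \Sigma_n$ and $\tau \in \Sigma_k$, and $a \le b$, the product of permuted simplexes satisfies $\Delta_{a,b}^n\sigma \times \Delta_{a,b}^k\tau = \bigcup_{\rho \in \mathrm{Sh}(n,k)} \Delta_{a,b}^{n+k}((\sigma * \tau)\circ\rho^{-1})$, where the union is disjoint up to sets of Lebesgue measure zero. -/
open MeasureTheory

/-- The simplex `Δ_{a,b}^n`. -/
def simplex (a b : ℝ) (n : ℕ) : Set (Fin n → ℝ) :=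
  {r | (∀ i, a ≤ r i ∧ r i ≤ b) ∧ ∀ i j : Fin n, i ≤ j → r i ≤ r j}

/-- The permuted simplex `Δ_{a,b}^n σ = {r : a ≤ r (σ 0) ≤ ⋯ ≤ r (σ (n-1)) ≤ b}`. -/
def permSimplex (a b : ℝ) (n : ℕ) (σ : Equiv.Perm (Fin n)) : Set (Fin n → ℝ) :=
  {r | (fun i => r (σ i)) ∈ simplex a b n}

/-- `ρ` is an `(n,k)`-shuffle: it is increasing on the first `n` and the last `k` indices. -/
def IsShuffle (n k : ℕ) (ρ : Equiv.Perm (Fin (n + k))) : Prop :=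
  ∀ i j : Fin (n + k), i < j → ((j : ℕ) < n ∨ n ≤ (i : ℕ)) → ρ i < ρ j

/-- The concatenation product `σ * τ` of two permutations: acts as `σ` on the first `n`
letters and as the shift of `τ` on the last `k` letters. -/
def concatPerm {n k : ℕ} (σ : Equiv.Perm (Fin n)) (τ : Equiv.Perm (Fin k)) :
    Equiv.Perm (Fin (n + k)) :=
  finSumFinEquiv.symm.trans ((Equiv.sumCongr σ τ).trans finSumFinEquiv)

/-- The product `Δ_{a,b}^n σ × Δ_{a,b}^k τ`, viewed in `ℝ^{n+k}` via concatenation. -/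
def prodPermSimplex (a b : ℝ) (n k : ℕ) (σ : Equiv.Perm (Fin n)) (τ : Equiv.Perm (Fin k)) :
    Set (Fin (n + k) → ℝ) :=
  {r | (fun i : Fin n => r (Fin.castAdd k i)) ∈ permSimplex a b n σ ∧
       (fun j : Fin k => r (Fin.natAdd n j)) ∈ permSimplex a b k τ}

lemma concatPerm_castAdd {n k : ℕ} (σ : Equiv.Perm (Fin n)) (τ : Equiv.Perm (Fin k)) (i : Fin n) :
    concatPerm σ τ (Fin.castAdd k i) = Fin.castAdd k (σ i) := by
  simp [concatPerm]
lemma concatPerm_natAdd {n k : ℕ} (σ : Equiv.Perm (Fin n)) (τ : Equiv.Perm (Fin k)) (j : Fin k) :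
    concatPerm σ τ (Fin.natAdd n j) = Fin.natAdd n (τ j) := by
  simp [concatPerm]
lemma mem_permSimplex {a b : ℝ} {m : ℕ} {π : Equiv.Perm (Fin m)} {r : Fin m → ℝ} :
    r ∈ permSimplex a b m π ↔ (∀ i, a ≤ r i ∧ r i ≤ b) ∧ Monotone (fun i => r (π i)) := by
  constructor
  · rintro ⟨h1, h2⟩
    exact ⟨fun i => by simpa using h1 (π.symm i), fun i j hij => h2 i j hij⟩
  · rintro ⟨h1, h2⟩
    exact ⟨fun i => h1 _, fun i j hij => h2 hij⟩
lemma vol_eq_zero {m : ℕ} {p q : Fin m} (hpq : p ≠ q) :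
    volume {r : Fin m → ℝ | r p = r q} = 0 := by
  set f : (Fin m → ℝ) →ₗ[ℝ] ℝ := (LinearMap.proj p : (Fin m → ℝ) →ₗ[ℝ] ℝ) - LinearMap.proj q with hf
  have hset : {r : Fin m → ℝ | r p = r q} = (LinearMap.ker f : Set (Fin m → ℝ)) := by
    ext r
    simp [hf, sub_eq_zero, LinearMap.mem_ker, eq_comm]
  rw [hset]
  apply Measure.addHaar_submodule
  intro htop
  have h1 : Pi.single p (1:ℝ) ∈ LinearMap.ker f := htop ▸ Submodule.mem_top
  simp [hf, Pi.single_apply, hpq, Ne.symm hpq] at h1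

set_option maxRecDepth 8000 in
/-- `Δ_{a,b}^n σ × Δ_{a,b}^k τ = ⋃_{ρ ∈ Sh(n,k)} Δ_{a,b}^{n+k} ((σ*τ) ∘ ρ⁻¹)`,
the union being disjoint up to Lebesgue measure zero. -/
theorem stmt1 (a b : ℝ) (hab : a ≤ b) (n k : ℕ) (hn : 0 < n) (hk : 0 < k)
    (σ : Equiv.Perm (Fin n)) (τ : Equiv.Perm (Fin k)) :
    (prodPermSimplex a b n k σ τ =
      ⋃ ρ ∈ {ρ : Equiv.Perm (Fin (n + k)) | IsShuffle n k ρ},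
        permSimplex a b (n + k) (concatPerm σ τ * ρ⁻¹)) ∧
    (∀ ρ ρ' : Equiv.Perm (Fin (n + k)), IsShuffle n k ρ → IsShuffle n k ρ' → ρ ≠ ρ' →
      volume (permSimplex a b (n + k) (concatPerm σ τ * ρ⁻¹) ∩
              permSimplex a b (n + k) (concatPerm σ τ * ρ'⁻¹)) = 0) := by
  classical
  constructor
  · ext r
    set s : Fin (n + k) → ℝ := fun i => r (concatPerm σ τ i) with hs
    simp only [Set.mem_iUnion, Set.mem_setOf_eq]
    constructor
    · rintro ⟨h1, h2⟩
      rw [mem_permSimplex] at h1 h2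
      have hb : ∀ i : Fin (n + k), a ≤ r i ∧ r i ≤ b := fun i =>
        Fin.addCases (fun i => h1.1 i) (fun j => h2.1 j) i
      have mono1 : Monotone (fun i : Fin n => s (Fin.castAdd k i)) := by
        intro x y hxy
        simpa only [hs, concatPerm_castAdd] using h1.2 hxy
      have mono2 : Monotone (fun j : Fin k => s (Fin.natAdd n j)) := by
        intro x y hxy
        simpa only [hs, concatPerm_natAdd] using h2.2 hxy
      set π := Tuple.sort s with hπ
      have hst := Tuple.eq_sort_iff.mp hπ
      refine ⟨π⁻¹, ?_, ?_⟩
      · intro i j hij hblk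
        by_contra hle
        push_neg at hle
        have hne : π⁻¹ j ≠ π⁻¹ i := fun h => absurd (by simpa using congrArg π h) hij.ne'
        have hlt : π⁻¹ j < π⁻¹ i := lt_of_le_of_ne hle hne
        have hji : s j ≤ s i := by simpa using hst.1 hlt.le
        have hij2 : s i ≤ s j := by
          rcases hblk with hj | hi
          · have hi' : (i : ℕ) < n := lt_trans hij hj
            have e1 : Fin.castAdd k ⟨(i : ℕ), hi'⟩ = i := Fin.ext rfl
            have e2 : Fin.castAdd k ⟨(j : ℕ), hj⟩ = j := Fin.ext rfl
            have := mono1 (show (⟨(i : ℕ), hi'⟩ : Fin n) ≤ ⟨(j : ℕ), hj⟩ from hij.le)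
            simpa only [e1, e2] using this
          · have hj' : n ≤ (j : ℕ) := le_trans hi hij.le
            have hik : (i : ℕ) - n < k := by omega
            have hjk : (j : ℕ) - n < k := by omega
            have e1 : Fin.natAdd n ⟨(i : ℕ) - n, hik⟩ = i := Fin.ext (by simp; omega)
            have e2 : Fin.natAdd n ⟨(j : ℕ) - n, hjk⟩ = j := Fin.ext (by simp; omega)
            have := mono2 (show (⟨(i : ℕ) - n, hik⟩ : Fin k) ≤ ⟨(j : ℕ) - n, hjk⟩ from by
              simp only [Fin.mk_le_mk]; omega)
            simpa only [e1, e2] using this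
        have heq : s (π (π⁻¹ j)) = s (π (π⁻¹ i)) := by
          simp only [Equiv.Perm.coe_inv, Equiv.apply_symm_apply]
          exact le_antisymm hji hij2
        have := hst.2 _ _ hlt heq
        simp only [Equiv.Perm.coe_inv, Equiv.apply_symm_apply] at this
        exact absurd this (not_lt.mpr hij.le)
      · rw [mem_permSimplex]
        refine ⟨hb, ?_⟩
        intro x y hxy
        have := Tuple.monotone_sort s hxy
        simpa [Equiv.Perm.mul_apply, hs] using this
    · rintro ⟨ρ, hρ, hr⟩
      rw [mem_permSimplex] at hr
      obtain ⟨hb, hmono⟩ := hr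
      refine ⟨mem_permSimplex.mpr ⟨fun i => hb _, ?_⟩, mem_permSimplex.mpr ⟨fun j => hb _, ?_⟩⟩
      · intro i j hij
        rcases eq_or_lt_of_le hij with h | h
        · exact le_of_eq (by rw [h])
        · have h2 : Fin.castAdd k i < Fin.castAdd k j := by
            rw [Fin.lt_def] at h ⊢; simpa using h
          have h3 := hρ _ _ h2 (Or.inl (by simp))
          have := hmono h3.le
          simpa [Equiv.Perm.mul_apply, concatPerm_castAdd] using this
      · intro i j hij
        rcases eq_or_lt_of_le hij with h | h
        · exact le_of_eq (by rw [h])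
        · have h2 : Fin.natAdd n i < Fin.natAdd n j := by
            rw [Fin.lt_def] at h ⊢; simpa using h
          have h3 := hρ _ _ h2 (Or.inr (by simp))
          have := hmono h3.le
          simpa [Equiv.Perm.mul_apply, concatPerm_natAdd] using this
  · intro ρ ρ' hρ hρ' hne
    have hsub : permSimplex a b (n + k) (concatPerm σ τ * ρ⁻¹) ∩
        permSimplex a b (n + k) (concatPerm σ τ * ρ'⁻¹) ⊆
        ⋃ (p : Fin (n + k)) (q : Fin (n + k)), {r : Fin (n + k) → ℝ | p ≠ q ∧ r p = r q} := by
      rintro r ⟨h1, h2⟩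
      rw [mem_permSimplex] at h1 h2
      set s : Fin (n + k) → ℝ := fun i => r (concatPerm σ τ i) with hs
      have hmono1 : Monotone (s ∘ (ρ⁻¹ : Equiv.Perm (Fin (n + k)))) := by
        intro x y hxy
        simpa [Equiv.Perm.mul_apply, hs] using h1.2 hxy
      have hmono2 : Monotone (s ∘ (ρ'⁻¹ : Equiv.Perm (Fin (n + k)))) := by
        intro x y hxy
        simpa [Equiv.Perm.mul_apply, hs] using h2.2 hxy
      by_cases hinj : Function.Injective s
      · exfalso
        have e1 : ρ⁻¹ = Tuple.sort s := Tuple.eq_sort_iff.mpr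
          ⟨hmono1, fun i j hij heq => absurd ((Equiv.injective _) (hinj heq)) hij.ne⟩
        have e2 : ρ'⁻¹ = Tuple.sort s := Tuple.eq_sort_iff.mpr
          ⟨hmono2, fun i j hij heq => absurd ((Equiv.injective _) (hinj heq)) hij.ne⟩
        exact hne (inv_injective (e1.trans e2.symm))
      · rw [Function.not_injective_iff] at hinj
        obtain ⟨x, y, hxy, hne2⟩ := hinj
        exact Set.mem_iUnion.mpr ⟨concatPerm σ τ x, Set.mem_iUnion.mpr ⟨concatPerm σ τ y,
          ⟨fun h => hne2 ((concatPerm σ τ).injective h), hxy⟩⟩⟩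
    refine measure_mono_null hsub ?_
    refine measure_iUnion_null fun p => measure_iUnion_null fun q => ?_
    by_cases hpq : p = q
    · simp [hpq]
    · exact measure_mono_null (fun r hr => hr.2) (vol_eq_zero hpq)
end

section
/- Let $X : [0,T]^2 \to \mathbb{R}^d$ be the Hadamard product of two Lipschitz paths $x^1, x^2 : [0,T] \to \mathbb{R}^d$, i.e., $X^i_{t_1,t_2} = x^{1,i}_{t_1} x^{2,i}_{t_2}$ for each coordinate $i$. Assume $x^1, x^2$ are $C^1$. Then for every word $w = (i_1,\dots,i_n)$, the identity 2D signature factorizes: $\langle \mathbf{S}^{\mathrm{id}}_{\mathbf{s}\mathbf{t}}(X), w\rangle = \langle S_{s_1 t_1}(x^1), w\rangle \cdot \langle S_{s_2 t_2}(x^2), w\rangle$. -/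
open MeasureTheory

/-- The mixed partial derivative `∂²f/∂r₁∂r₂`. -/
noncomputable def d12 (f : ℝ × ℝ → ℝ) (p : ℝ × ℝ) : ℝ :=
  deriv (fun a => deriv (fun b => f (a, b)) p.2) p.1

/-- The 2D simplex `Δ^n_{[s,t]}`: `n`-tuples of points of the rectangle, increasing in
both coordinates (recorded as a pair of increasing coordinate sequences). -/
def simplex2 (s1 t1 s2 t2 : ℝ) (n : ℕ) : Set ((Fin n → ℝ) × (Fin n → ℝ)) :=
  {p | p.1 ∈ simplex s1 t1 n ∧ p.2 ∈ simplex s2 t2 n}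

/-- The full 2D signature coefficient
`⟨S_{s,t}(X), (w, ν)⟩ = ∫_{Δⁿ_{[s,t]}} ∏ᵢ ∂₁₂X^{wᵢ}(r₁ⁱ, r₂^{ν(i)})`. -/
noncomputable def sigFull {d : ℕ} (X : Fin d → ℝ × ℝ → ℝ) (s1 s2 t1 t2 : ℝ)
    {n : ℕ} (w : Fin n → Fin d) (ν : Equiv.Perm (Fin n)) : ℝ :=
  ∫ p in simplex2 s1 t1 s2 t2 n, ∏ i, d12 (X (w i)) (p.1 i, p.2 (ν i))

/-- The 1D path signature coefficient
`⟨S_{s,t}(x), w⟩ = ∫_{s ≤ r¹ ≤ ⋯ ≤ rⁿ ≤ t} ẋ^{w₁}(r¹) ⋯ ẋ^{wₙ}(rⁿ)`. -/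
noncomputable def sig1 {d : ℕ} (x : ℝ → Fin d → ℝ) (s t : ℝ)
    {n : ℕ} (w : Fin n → Fin d) : ℝ :=
  ∫ r in simplex s t n, ∏ i, deriv (fun u => x u (w i)) (r i)

/-- for a Hadamard-product field `X^i(t₁,t₂) = x¹ⁱ(t₁) x²ⁱ(t₂)` of two `C¹`
paths, the identity 2D signature factorizes into the product of the 1D signatures. -/
theorem stmt5 {d : ℕ} (T : ℝ) (x1 x2 : ℝ → Fin d → ℝ)
    (hx1 : ContDiff ℝ 1 x1) (hx2 : ContDiff ℝ 1 x2)
    (s1 t1 s2 t2 : ℝ) (hs1 : 0 ≤ s1) (h1 : s1 ≤ t1) (ht1 : t1 ≤ T)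
    (hs2 : 0 ≤ s2) (h2 : s2 ≤ t2) (ht2 : t2 ≤ T)
    {n : ℕ} (w : Fin n → Fin d) :
    sigFull (fun i p => x1 p.1 i * x2 p.2 i) s1 s2 t1 t2 w 1 =
      sig1 x1 s1 t1 w * sig1 x2 s2 t2 w := by
  have hd1 : ∀ j, Differentiable ℝ (fun u => x1 u j) := fun j =>
    (differentiable_pi.1 (hx1.differentiable one_ne_zero)) j
  have hd2 : ∀ j, Differentiable ℝ (fun u => x2 u j) := fun j =>
    (differentiable_pi.1 (hx2.differentiable one_ne_zero)) j
  have key : ∀ (j : Fin d) (a b : ℝ),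
      d12 (fun p => x1 p.1 j * x2 p.2 j) (a, b)
        = deriv (fun u => x1 u j) a * deriv (fun u => x2 u j) b := by
    intro j a b
    unfold d12
    have h2' : (fun c => deriv (fun b' => x1 c j * x2 b' j) b)
        = fun c => x1 c j * deriv (fun u => x2 u j) b := by
      funext c
      exact deriv_const_mul _ ((hd2 j) b)
    simp only [h2']
    exact deriv_mul_const ((hd1 j) a) _
  unfold sigFull sig1
  have hset : simplex2 s1 t1 s2 t2 n = (simplex s1 t1 n) ×ˢ (simplex s2 t2 n) := rfl
  rw [hset]
  have hmeas : (volume : Measure ((Fin n → ℝ) × (Fin n → ℝ))).restrict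
        ((simplex s1 t1 n) ×ˢ (simplex s2 t2 n))
      = (volume.restrict (simplex s1 t1 n)).prod (volume.restrict (simplex s2 t2 n)) := by
    rw [MeasureTheory.Measure.volume_eq_prod, Measure.prod_restrict]
  rw [hmeas]
  have hint : ∀ p : (Fin n → ℝ) × (Fin n → ℝ),
      (∏ i, d12 (fun q => x1 q.1 (w i) * x2 q.2 (w i)) (p.1 i, p.2 ((1 : Equiv.Perm (Fin n)) i)))
        = (∏ i, deriv (fun u => x1 u (w i)) (p.1 i)) * ∏ i, deriv (fun u => x2 u (w i)) (p.2 i) := by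
    intro p
    rw [← Finset.prod_mul_distrib]
    exact Finset.prod_congr rfl fun i _ => key (w i) _ _
  simp only [hint]
  exact MeasureTheory.integral_prod_mul (L := ℝ) (fun r : Fin n → ℝ => ∏ i, deriv (fun u => x1 u (w i)) (r i)) (fun r : Fin n → ℝ => ∏ i, deriv (fun u => x2 u (w i)) (r i))
end

section
/- Let $X : [0,T]^2 \to \mathbb{R}^d$ be $C^2$ and let $\phi(t_1,t_2) = (\phi_1(t_1), \phi_2(t_2))$ be a stretching, i.e., $\phi_1, \phi_2 : [0,T] \to [0,T]$ are $C^1$ monotone nondecreasing with $\phi_i(0)=0$, $\phi_i(T)=T$. Then the full 2D signature of the stretched field $X^\phi = X \circ \phi$ satisfies $\langle \mathbf{S}_{\mathbf{s}\mathbf{t}}(X^\phi),(w,\nu)\rangle = \langle \mathbf{S}_{\phi(\mathbf{s})\phi(\mathbf{t})}(X),(w,\nu)\rangle$. In particular, $\mathbf{S}_{\mathbf{0}\mathbf{T}}(X^\phi) = \mathbf{S}_{\mathbf{0}\mathbf{T}}(X)$, i.e., the 2D signature over the full square is invariant to stretching. -/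
open MeasureTheory

/-! ### Derivative helpers -/

noncomputable def D2 (f : ℝ × ℝ → ℝ) (p : ℝ × ℝ) : ℝ := fderiv ℝ f p (0, 1)

lemma hasDerivAt_snd {X : ℝ × ℝ → ℝ} (hX : ContDiff ℝ 2 X) (a v : ℝ) :
    HasDerivAt (fun b => X (a, b)) (D2 X (a, v)) v := by
  have h1 : HasDerivAt (fun b : ℝ => (a, b)) ((0 : ℝ), (1 : ℝ)) v :=
    (hasDerivAt_const v a).prodMk (hasDerivAt_id v)
  exact ((hX.differentiable (by norm_num)).differentiableAt.hasFDerivAt).comp_hasDerivAt v h1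

lemma deriv_snd {X : ℝ × ℝ → ℝ} (hX : ContDiff ℝ 2 X) (a v : ℝ) :
    deriv (fun b => X (a, b)) v = D2 X (a, v) := (hasDerivAt_snd hX a v).deriv

lemma contDiff_D2 {X : ℝ × ℝ → ℝ} (hX : ContDiff ℝ 2 X) : ContDiff ℝ 1 (D2 X) := by
  have h := hX.fderiv_right (m := 1) (by norm_num)
  exact (ContinuousLinearMap.apply ℝ ℝ ((0 : ℝ), (1 : ℝ))).contDiff.comp h

lemma hasDerivAt_D2_fst {X : ℝ × ℝ → ℝ} (hX : ContDiff ℝ 2 X) (u v : ℝ) :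
    HasDerivAt (fun a => D2 X (a, v)) (fderiv ℝ (D2 X) (u, v) (1, 0)) u := by
  have h1 : HasDerivAt (fun a : ℝ => (a, v)) ((1 : ℝ), (0 : ℝ)) u :=
    (hasDerivAt_id u).prodMk (hasDerivAt_const u v)
  exact (((contDiff_D2 hX).differentiable one_ne_zero).differentiableAt.hasFDerivAt).comp_hasDerivAt u h1

lemma d12_eq {X : ℝ × ℝ → ℝ} (hX : ContDiff ℝ 2 X) (p : ℝ × ℝ) :
    d12 X p = fderiv ℝ (D2 X) p (1, 0) := by
  have : (fun a => deriv (fun b => X (a, b)) p.2) = fun a => D2 X (a, p.2) := by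
    funext a; exact deriv_snd hX a p.2
  rw [d12, this]
  have := (hasDerivAt_D2_fst hX p.1 p.2).deriv
  rwa [Prod.mk.eta] at this

lemma d12_continuous {X : ℝ × ℝ → ℝ} (hX : ContDiff ℝ 2 X) : Continuous (d12 X) := by
  have : d12 X = fun p => fderiv ℝ (D2 X) p (1, 0) := funext fun p => d12_eq hX p
  rw [this]
  exact (ContinuousLinearMap.apply ℝ ℝ ((1 : ℝ), (0 : ℝ))).continuous.comp
    ((contDiff_D2 hX).continuous_fderiv one_ne_zero)

lemma d12_comp {X : ℝ × ℝ → ℝ} (hX : ContDiff ℝ 2 X) {φ1 φ2 : ℝ → ℝ}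
    (hφ1 : ContDiff ℝ 1 φ1) (hφ2 : ContDiff ℝ 1 φ2) (a b : ℝ) :
    d12 (fun p => X (φ1 p.1, φ2 p.2)) (a, b) =
      d12 X (φ1 a, φ2 b) * deriv φ1 a * deriv φ2 b := by
  have inner : ∀ a' : ℝ, deriv (fun b' => X (φ1 a', φ2 b')) b
      = D2 X (φ1 a', φ2 b) * deriv φ2 b := by
    intro a'
    have h2 : HasDerivAt φ2 (deriv φ2 b) b :=
      ((hφ2.differentiable one_ne_zero) b).hasDerivAt
    have := (hasDerivAt_snd hX (φ1 a') (φ2 b)).comp b h2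
    simpa [mul_comm, Function.comp_def] using this.deriv
  have : (fun a' => deriv (fun b' => X (φ1 a', φ2 b')) b)
      = fun a' => D2 X (φ1 a', φ2 b) * deriv φ2 b := funext inner
  show deriv (fun a' => deriv (fun b' => X (φ1 a', φ2 b')) b) a = _
  rw [this]
  have h1 : HasDerivAt φ1 (deriv φ1 a) a := ((hφ1.differentiable one_ne_zero) a).hasDerivAt
  have hD : HasDerivAt (fun u => D2 X (u, φ2 b)) (fderiv ℝ (D2 X) (φ1 a, φ2 b) (1, 0)) (φ1 a) :=
    hasDerivAt_D2_fst hX (φ1 a) (φ2 b)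
  have hcomp : HasDerivAt (fun a' => D2 X (φ1 a', φ2 b))
      (fderiv ℝ (D2 X) (φ1 a, φ2 b) (1, 0) * deriv φ1 a) a := by
    simpa [mul_comm, Function.comp_def] using hD.comp a h1
  have := (hcomp.mul_const (deriv φ2 b)).deriv
  rw [this, d12_eq hX]

/-! ### Monotonicity and derivative sign -/

lemma deriv_nonneg_of_monotoneOn {φ : ℝ → ℝ} {T : ℝ} (hT : 0 < T) (hφ : ContDiff ℝ 1 φ)
    (hm : MonotoneOn φ (Set.Icc 0 T)) {x : ℝ} (hx : x ∈ Set.Icc 0 T) : 0 ≤ deriv φ x := by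
  have hd : HasDerivAt φ (deriv φ x) x := ((hφ.differentiable one_ne_zero) x).hasDerivAt
  rcases lt_or_eq_of_le hx.2 with hxT | hxT
  · have h' : HasDerivWithinAt φ (deriv φ x) (Set.Ici x) x := hd.hasDerivWithinAt
    rw [hasDerivWithinAt_iff_tendsto_slope] at h'
    have hset : Set.Ici x \ {x} = Set.Ioi x := Set.Ici_sdiff_left
    rw [hset] at h'
    refine ge_of_tendsto h' ?_
    filter_upwards [Ioc_mem_nhdsGT_of_mem ⟨le_refl x, hxT⟩] with y hy
    rw [slope_def_field]
    have hyI : y ∈ Set.Icc 0 T := ⟨le_trans hx.1 (le_of_lt hy.1), hy.2⟩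
    exact div_nonneg (sub_nonneg.2 (hm hx hyI (le_of_lt hy.1))) (sub_nonneg.2 (le_of_lt hy.1))
  · subst hxT
    have h' : HasDerivWithinAt φ (deriv φ x) (Set.Iic x) x := hd.hasDerivWithinAt
    rw [hasDerivWithinAt_iff_tendsto_slope] at h'
    have hset : Set.Iic x \ {x} = Set.Iio x := Set.Iic_diff_right
    rw [hset] at h'
    refine ge_of_tendsto h' ?_
    filter_upwards [Ioo_mem_nhdsLT_of_mem ⟨hT, le_refl x⟩] with y hy
    rw [slope_def_field]
    have hyI : y ∈ Set.Icc 0 x := ⟨le_of_lt hy.1, le_of_lt hy.2⟩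
    have h1 : φ y - φ x ≤ 0 := sub_nonpos.2 (hm hyI hx (le_of_lt hy.2))
    have h2 : y - x < 0 := sub_neg.2 hy.2
    exact div_nonneg_iff.2 (Or.inr ⟨h1, le_of_lt h2⟩)

lemma deriv_eq_zero_of_constant_right {φ : ℝ → ℝ} (hφ : ContDiff ℝ 1 φ)
    {x y : ℝ} (hxy : x < y) (hconst : ∀ z ∈ Set.Icc x y, φ z = φ x) : deriv φ x = 0 := by
  have hd : HasDerivAt φ (deriv φ x) x := ((hφ.differentiable one_ne_zero) x).hasDerivAt
  have h' : HasDerivWithinAt φ (deriv φ x) (Set.Ici x) x := hd.hasDerivWithinAt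
  rw [hasDerivWithinAt_iff_tendsto_slope, Set.Ici_sdiff_left] at h'
  have hev : slope φ x =ᶠ[nhdsWithin x (Set.Ioi x)] fun _ => (0:ℝ) := by
    filter_upwards [Ioc_mem_nhdsGT_of_mem ⟨le_refl x, hxy⟩] with z hz
    rw [slope_def_field, hconst z ⟨le_of_lt hz.1, hz.2⟩, sub_self, zero_div]
  exact tendsto_nhds_unique (h'.congr' hev) tendsto_const_nhds

lemma deriv_eq_zero_of_apply_eq {φ : ℝ → ℝ} {T : ℝ} (hφ : ContDiff ℝ 1 φ)
    (hm : MonotoneOn φ (Set.Icc 0 T)) {x y : ℝ} (hx : x ∈ Set.Icc 0 T) (hy : y ∈ Set.Icc 0 T)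
    (hxy : x < y) (heq : φ x = φ y) : deriv φ x = 0 := by
  refine deriv_eq_zero_of_constant_right hφ hxy (fun z hz => ?_)
  have hzI : z ∈ Set.Icc 0 T := ⟨le_trans hx.1 hz.1, le_trans hz.2 hy.2⟩
  have hA := hm hx hzI hz.1
  have hB := hm hzI hy hz.2
  rw [← heq] at hB
  exact le_antisymm hB hA

/-! ### Linear algebra helpers -/

noncomputable def diagCLM (n : ℕ) (c : Fin n → ℝ) : (Fin n → ℝ) →L[ℝ] (Fin n → ℝ) :=
  ContinuousLinearMap.pi fun i => c i • ContinuousLinearMap.proj i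

lemma hasFDerivAt_comp_pi {n : ℕ} {φ : ℝ → ℝ} (hφ : ContDiff ℝ 1 φ) (x : Fin n → ℝ) :
    HasFDerivAt (fun y : Fin n → ℝ => fun i => φ (y i))
      (diagCLM n (fun i => deriv φ (x i))) x := by
  apply hasFDerivAt_pi.2
  intro i
  exact HasDerivAt.comp_hasFDerivAt x (((hφ.differentiable one_ne_zero) (x i)).hasDerivAt)
    (hasFDerivAt_apply i x)

lemma det_diagCLM {n : ℕ} (c : Fin n → ℝ) : (diagCLM n c).det = ∏ i, c i := by
  have h : LinearMap.toMatrix (Pi.basisFun ℝ (Fin n)) (Pi.basisFun ℝ (Fin n))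
      ((diagCLM n c) : (Fin n → ℝ) →ₗ[ℝ] (Fin n → ℝ)) = Matrix.diagonal c := by
    ext i j
    rw [LinearMap.toMatrix_apply']
    simp [diagCLM, Matrix.diagonal, Pi.basisFun_apply, Pi.single_apply, eq_comm]
  rw [ContinuousLinearMap.det, ← LinearMap.det_toMatrix (Pi.basisFun ℝ (Fin n)), h,
    Matrix.det_diagonal]

lemma det_prodMapCLM {n : ℕ} (f g : (Fin n → ℝ) →L[ℝ] (Fin n → ℝ)) :
    (f.prodMap g).det = f.det * g.det := by
  have hcoe : ((f.prodMap g) : (Fin n → ℝ) × (Fin n → ℝ) →ₗ[ℝ] ((Fin n → ℝ) × (Fin n → ℝ))) =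
      LinearMap.prodMap (f : (Fin n → ℝ) →ₗ[ℝ] (Fin n → ℝ)) (g : (Fin n → ℝ) →ₗ[ℝ] (Fin n → ℝ)) := by
    ext x <;> rfl
  rw [ContinuousLinearMap.det, hcoe]
  set B := Pi.basisFun ℝ (Fin n)
  rw [← LinearMap.det_toMatrix (B.prod B), LinearMap.toMatrix_prodMap,
    Matrix.det_fromBlocks_zero₂₁, LinearMap.det_toMatrix, LinearMap.det_toMatrix]

/-! ### Simplex topology/measure helpers -/

lemma simplex2_eq_prod (s1 t1 s2 t2 : ℝ) (n : ℕ) :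
    simplex2 s1 t1 s2 t2 n = simplex s1 t1 n ×ˢ simplex s2 t2 n := rfl

lemma isClosed_simplex (a b : ℝ) (n : ℕ) : IsClosed (simplex a b n) := by
  have : simplex a b n =
      (⋂ i, {r : Fin n → ℝ | a ≤ r i ∧ r i ≤ b}) ∩
        ⋂ (i) (j), {r : Fin n → ℝ | i ≤ j → r i ≤ r j} := by
    ext r; simp [simplex, Set.mem_iInter, forall_and]
  rw [this]
  refine IsClosed.inter (isClosed_iInter fun i => ?_) (isClosed_iInter fun i =>
    isClosed_iInter fun j => ?_)
  · exact (isClosed_le continuous_const (continuous_apply i)).inter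
      (isClosed_le (continuous_apply i) continuous_const)
  · by_cases h : i ≤ j
    · simp only [h, forall_true_left]
      exact isClosed_le (continuous_apply i) (continuous_apply j)
    · simp only [h]
      simpa using isClosed_univ

lemma simplex_subset_Icc (a b : ℝ) (n : ℕ) :
    simplex a b n ⊆ Set.Icc (fun _ => a) (fun _ => b) := by
  intro r hr
  constructor <;> intro i
  · exact (hr.1 i).1
  · exact (hr.1 i).2

lemma isCompact_simplex (a b : ℝ) (n : ℕ) : IsCompact (simplex a b n) :=
  IsCompact.of_isClosed_subset isCompact_Icc (isClosed_simplex a b n) (simplex_subset_Icc a b n)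

lemma isCompact_simplex2 (s1 t1 s2 t2 : ℝ) (n : ℕ) : IsCompact (simplex2 s1 t1 s2 t2 n) := by
  rw [simplex2_eq_prod]; exact (isCompact_simplex _ _ _).prod (isCompact_simplex _ _ _)

lemma measurableSet_simplex2 (s1 t1 s2 t2 : ℝ) (n : ℕ) :
    MeasurableSet (simplex2 s1 t1 s2 t2 n) := by
  rw [simplex2_eq_prod]
  exact ((isClosed_simplex _ _ _).measurableSet).prod ((isClosed_simplex _ _ _).measurableSet)

lemma volume_pi_update_null {n : ℕ} {B : Set ℝ} (hB : volume B = 0) (i : Fin n) (a b : ℝ) :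
    volume (Set.pi Set.univ (Function.update (fun _ : Fin n => Set.Icc a b) i B)) = 0 := by
  rw [volume_pi_pi]
  refine Finset.prod_eq_zero (Finset.mem_univ i) ?_
  simp [hB]

lemma null_slice_fst {n : ℕ} {B : Set ℝ} (hB : volume B = 0) (i : Fin n) (a b c e : ℝ) :
    volume {p : (Fin n → ℝ) × (Fin n → ℝ) |
      (p.1 ∈ simplex a b n ∧ p.2 ∈ simplex c e n) ∧ p.1 i ∈ B} = 0 := by
  refine measure_mono_null (fun p hp => ?_)
    (show volume ((Set.pi Set.univ (Function.update (fun _ : Fin n => Set.Icc a b) i B)) ×ˢ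
      (Set.univ : Set (Fin n → ℝ))) = 0 from ?_)
  · refine ⟨fun j _ => ?_, trivial⟩
    rcases eq_or_ne j i with h | h
    · subst h; simpa [Function.update_self] using hp.2
    · simp only [Function.update_of_ne h]
      exact ⟨(hp.1.1.1 j).1, (hp.1.1.1 j).2⟩
  · rw [Measure.volume_eq_prod, Measure.prod_prod, volume_pi_update_null hB]
    simp

lemma null_slice_snd {n : ℕ} {B : Set ℝ} (hB : volume B = 0) (i : Fin n) (a b c e : ℝ) :
    volume {p : (Fin n → ℝ) × (Fin n → ℝ) |
      (p.1 ∈ simplex a b n ∧ p.2 ∈ simplex c e n) ∧ p.2 i ∈ B} = 0 := by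
  refine measure_mono_null (fun p hp => ?_)
    (show volume ((Set.univ : Set (Fin n → ℝ)) ×ˢ
      (Set.pi Set.univ (Function.update (fun _ : Fin n => Set.Icc c e) i B))) = 0 from ?_)
  · refine ⟨trivial, fun j _ => ?_⟩
    rcases eq_or_ne j i with h | h
    · subst h; simpa [Function.update_self] using hp.2
    · simp only [Function.update_of_ne h]
      exact ⟨(hp.1.2.1 j).1, (hp.1.2.1 j).2⟩
  · rw [Measure.volume_eq_prod, Measure.prod_prod, volume_pi_update_null hB]
    simp

/-! ### Sard-type lemma -/

lemma null_critical_image {φ : ℝ → ℝ} (hφ : ContDiff ℝ 1 φ) (a b : ℝ) :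
    volume (φ '' {x | x ∈ Set.Icc a b ∧ deriv φ x = 0}) = 0 := by
  refine addHaar_image_eq_zero_of_det_fderivWithin_eq_zero volume
    (f' := fun x => (1 : ℝ →L[ℝ] ℝ).smulRight (deriv φ x)) (fun x _ => ?_) (fun x hx => ?_)
  · exact (((hφ.differentiable one_ne_zero) x).hasDerivAt).hasFDerivAt.hasFDerivWithinAt
  · rw [ContinuousLinearMap.det_smulRight, ContinuousLinearMap.one_apply, one_mul]
    exact hx.2

/-! ### The key change-of-variables lemma -/

instance {n : ℕ} : (volume : Measure ((Fin n → ℝ) × (Fin n → ℝ))).IsAddHaarMeasure := by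
  rw [Measure.volume_eq_prod]; exact Measure.prod.instIsAddHaarMeasure _ _

lemma key_cov {T : ℝ} (hT : 0 < T) {φ1 φ2 : ℝ → ℝ}
    (hφ1 : ContDiff ℝ 1 φ1) (hφ2 : ContDiff ℝ 1 φ2)
    (hm1 : MonotoneOn φ1 (Set.Icc 0 T)) (hm2 : MonotoneOn φ2 (Set.Icc 0 T))
    {n : ℕ} {s1 t1 s2 t2 : ℝ} (hs1 : 0 ≤ s1) (h1 : s1 ≤ t1) (ht1 : t1 ≤ T)
    (hs2 : 0 ≤ s2) (h2 : s2 ≤ t2) (ht2 : t2 ≤ T)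
    (G : (Fin n → ℝ) × (Fin n → ℝ) → ℝ) (hG : Continuous G) :
    ∫ p in simplex2 s1 t1 s2 t2 n,
        ((∏ i, deriv φ1 (p.1 i)) * ∏ i, deriv φ2 (p.2 i)) * G (φ1 ∘ p.1, φ2 ∘ p.2)
      = ∫ p in simplex2 (φ1 s1) (φ1 t1) (φ2 s2) (φ2 t2) n, G p := by
  classical
  have hIcc1 : Set.Icc s1 t1 ⊆ Set.Icc 0 T := Set.Icc_subset_Icc hs1 ht1
  have hIcc2 : Set.Icc s2 t2 ⊆ Set.Icc 0 T := Set.Icc_subset_Icc hs2 ht2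
  have hs1T : s1 ∈ Set.Icc (0:ℝ) T := ⟨hs1, le_trans h1 ht1⟩
  have ht1T : t1 ∈ Set.Icc (0:ℝ) T := ⟨le_trans hs1 h1, ht1⟩
  have hs2T : s2 ∈ Set.Icc (0:ℝ) T := ⟨hs2, le_trans h2 ht2⟩
  have ht2T : t2 ∈ Set.Icc (0:ℝ) T := ⟨le_trans hs2 h2, ht2⟩
  have hd1 : ∀ x ∈ Set.Icc s1 t1, 0 ≤ deriv φ1 x := fun x hx =>
    deriv_nonneg_of_monotoneOn hT hφ1 hm1 (hIcc1 hx)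
  have hd2 : ∀ x ∈ Set.Icc s2 t2, 0 ≤ deriv φ2 x := fun x hx =>
    deriv_nonneg_of_monotoneOn hT hφ2 hm2 (hIcc2 hx)
  set S := simplex2 s1 t1 s2 t2 n with hSdef
  set U := {p : (Fin n → ℝ) × (Fin n → ℝ) |
    (∀ i, 0 < deriv φ1 (p.1 i)) ∧ (∀ i, 0 < deriv φ2 (p.2 i))} with hUdef
  set s := S ∩ U with hsdef
  set Φ := fun p : (Fin n → ℝ) × (Fin n → ℝ) => (φ1 ∘ p.1, φ2 ∘ p.2) with hΦdef
  have hSmeas : MeasurableSet S := measurableSet_simplex2 s1 t1 s2 t2 n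
  have hUopen : IsOpen U := by
    have hUeq : U = (⋂ i, {p : (Fin n → ℝ) × (Fin n → ℝ) | 0 < deriv φ1 (p.1 i)}) ∩
        ⋂ i, {p : (Fin n → ℝ) × (Fin n → ℝ) | 0 < deriv φ2 (p.2 i)} := by
      ext p; simp [hUdef, Set.mem_iInter]
    rw [hUeq]
    refine IsOpen.inter (isOpen_iInter_of_finite fun i => ?_)
      (isOpen_iInter_of_finite fun i => ?_)
    · exact isOpen_lt continuous_const
        ((hφ1.continuous_deriv le_rfl).comp ((continuous_apply i).comp continuous_fst))
    · exact isOpen_lt continuous_const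
        ((hφ2.continuous_deriv le_rfl).comp ((continuous_apply i).comp continuous_snd))
  have hsmeas : MeasurableSet s := hSmeas.inter hUopen.measurableSet
  set f' := fun p : (Fin n → ℝ) × (Fin n → ℝ) =>
    (diagCLM n fun i => deriv φ1 (p.1 i)).prodMap (diagCLM n fun i => deriv φ2 (p.2 i))
    with hf'def
  have hf' : ∀ p ∈ s, HasFDerivWithinAt Φ (f' p) s p := by
    intro p _
    exact (HasFDerivAt.prodMap p (hasFDerivAt_comp_pi hφ1 p.1)
      (hasFDerivAt_comp_pi hφ2 p.2)).hasFDerivWithinAt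
  have keyinj : ∀ (φ : ℝ → ℝ), ContDiff ℝ 1 φ → MonotoneOn φ (Set.Icc 0 T) →
      ∀ x y : ℝ, x ∈ Set.Icc 0 T → y ∈ Set.Icc 0 T → 0 < deriv φ x → 0 < deriv φ y →
      φ x = φ y → x = y := by
    intro φ hφ hm x y hx hy hdx hdy heq
    rcases lt_trichotomy x y with h | h | h
    · exact absurd (deriv_eq_zero_of_apply_eq hφ hm hx hy h heq) (ne_of_gt hdx)
    · exact h
    · exact absurd (deriv_eq_zero_of_apply_eq hφ hm hy hx h heq.symm) (ne_of_gt hdy)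
  have hinj : Set.InjOn Φ s := by
    rintro p hp q hq hpq
    have h1' : ∀ i, φ1 (p.1 i) = φ1 (q.1 i) := fun i => congrFun (congrArg Prod.fst hpq) i
    have h2' : ∀ i, φ2 (p.2 i) = φ2 (q.2 i) := fun i => congrFun (congrArg Prod.snd hpq) i
    have e1 : p.1 = q.1 := funext fun i => keyinj φ1 hφ1 hm1 _ _
      (hIcc1 ⟨(hp.1.1.1 i).1, (hp.1.1.1 i).2⟩) (hIcc1 ⟨(hq.1.1.1 i).1, (hq.1.1.1 i).2⟩)
      (hp.2.1 i) (hq.2.1 i) (h1' i)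
    have e2 : p.2 = q.2 := funext fun i => keyinj φ2 hφ2 hm2 _ _
      (hIcc2 ⟨(hp.1.2.1 i).1, (hp.1.2.1 i).2⟩) (hIcc2 ⟨(hq.1.2.1 i).1, (hq.1.2.1 i).2⟩)
      (hp.2.2 i) (hq.2.2 i) (h2' i)
    exact Prod.ext e1 e2
  have himg : Φ '' s ⊆ simplex2 (φ1 s1) (φ1 t1) (φ2 s2) (φ2 t2) n := by
    rintro _ ⟨p, hp, rfl⟩
    refine ⟨⟨fun i => ⟨?_, ?_⟩, fun i j hij => ?_⟩, ⟨fun i => ⟨?_, ?_⟩, fun i j hij => ?_⟩⟩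
    · exact hm1 hs1T (hIcc1 ⟨(hp.1.1.1 i).1, (hp.1.1.1 i).2⟩) (hp.1.1.1 i).1
    · exact hm1 (hIcc1 ⟨(hp.1.1.1 i).1, (hp.1.1.1 i).2⟩) ht1T (hp.1.1.1 i).2
    · exact hm1 (hIcc1 ⟨(hp.1.1.1 i).1, (hp.1.1.1 i).2⟩)
        (hIcc1 ⟨(hp.1.1.1 j).1, (hp.1.1.1 j).2⟩) (hp.1.1.2 i j hij)
    · exact hm2 hs2T (hIcc2 ⟨(hp.1.2.1 i).1, (hp.1.2.1 i).2⟩) (hp.1.2.1 i).1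
    · exact hm2 (hIcc2 ⟨(hp.1.2.1 i).1, (hp.1.2.1 i).2⟩) ht2T (hp.1.2.1 i).2
    · exact hm2 (hIcc2 ⟨(hp.1.2.1 i).1, (hp.1.2.1 i).2⟩)
        (hIcc2 ⟨(hp.1.2.1 j).1, (hp.1.2.1 j).2⟩) (hp.1.2.2 i j hij)
  have hB1 : volume (φ1 '' {x | x ∈ Set.Icc s1 t1 ∧ deriv φ1 x = 0}) = 0 :=
    null_critical_image hφ1 s1 t1
  have hB2 : volume (φ2 '' {x | x ∈ Set.Icc s2 t2 ∧ deriv φ2 x = 0}) = 0 :=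
    null_critical_image hφ2 s2 t2
  have hdiffnull : volume (simplex2 (φ1 s1) (φ1 t1) (φ2 s2) (φ2 t2) n \ Φ '' s) = 0 := by
    set B1 := φ1 '' {x | x ∈ Set.Icc s1 t1 ∧ deriv φ1 x = 0} with hB1def
    set B2 := φ2 '' {x | x ∈ Set.Icc s2 t2 ∧ deriv φ2 x = 0} with hB2def
    have hsub : simplex2 (φ1 s1) (φ1 t1) (φ2 s2) (φ2 t2) n \ Φ '' s ⊆
        (⋃ i, {p : (Fin n → ℝ) × (Fin n → ℝ) |
          (p.1 ∈ simplex (φ1 s1) (φ1 t1) n ∧ p.2 ∈ simplex (φ2 s2) (φ2 t2) n) ∧ p.1 i ∈ B1}) ∪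
        ⋃ i, {p : (Fin n → ℝ) × (Fin n → ℝ) |
          (p.1 ∈ simplex (φ1 s1) (φ1 t1) n ∧ p.2 ∈ simplex (φ2 s2) (φ2 t2) n) ∧ p.2 i ∈ B2} := by
      intro p hp
      by_contra hcon
      obtain ⟨hpT, hpI⟩ := hp
      have hnb1 : ∀ i, p.1 i ∉ B1 := fun i hi =>
        hcon (Or.inl (Set.mem_iUnion.2 ⟨i, ⟨⟨hpT.1, hpT.2⟩, hi⟩⟩))
      have hnb2 : ∀ i, p.2 i ∉ B2 := fun i hi =>
        hcon (Or.inr (Set.mem_iUnion.2 ⟨i, ⟨⟨hpT.1, hpT.2⟩, hi⟩⟩))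
      apply hpI
      have hex1 : ∀ i, ∃ x, x ∈ Set.Icc s1 t1 ∧ φ1 x = p.1 i := by
        intro i
        obtain ⟨x, hx, hfx⟩ := intermediate_value_Icc h1 hφ1.continuous.continuousOn
          (⟨(hpT.1.1 i).1, (hpT.1.1 i).2⟩ : p.1 i ∈ Set.Icc (φ1 s1) (φ1 t1))
        exact ⟨x, hx, hfx⟩
      have hex2 : ∀ i, ∃ y, y ∈ Set.Icc s2 t2 ∧ φ2 y = p.2 i := by
        intro i
        obtain ⟨y, hy, hfy⟩ := intermediate_value_Icc h2 hφ2.continuous.continuousOn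
          (⟨(hpT.2.1 i).1, (hpT.2.1 i).2⟩ : p.2 i ∈ Set.Icc (φ2 s2) (φ2 t2))
        exact ⟨y, hy, hfy⟩
      choose x hx hfx using hex1
      choose y hy hfy using hex2
      have hpos1 : ∀ i, 0 < deriv φ1 (x i) := by
        intro i
        rcases (hd1 _ (hx i)).lt_or_eq with h | h
        · exact h
        · exact absurd (⟨x i, ⟨hx i, h.symm⟩, hfx i⟩ : p.1 i ∈ B1) (hnb1 i)
      have hpos2 : ∀ i, 0 < deriv φ2 (y i) := by
        intro i
        rcases (hd2 _ (hy i)).lt_or_eq with h | h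
        · exact h
        · exact absurd (⟨y i, ⟨hy i, h.symm⟩, hfy i⟩ : p.2 i ∈ B2) (hnb2 i)
      have hmono1 : ∀ i j : Fin n, i ≤ j → x i ≤ x j := by
        intro i j hij
        by_contra hlt
        push_neg at hlt
        have hle : φ1 (x i) ≤ φ1 (x j) := by rw [hfx i, hfx j]; exact hpT.1.2 i j hij
        have hge : φ1 (x j) ≤ φ1 (x i) := hm1 (hIcc1 (hx j)) (hIcc1 (hx i)) (le_of_lt hlt)
        have heq : φ1 (x j) = φ1 (x i) := le_antisymm hge hle
        have hz := deriv_eq_zero_of_apply_eq hφ1 hm1 (hIcc1 (hx j)) (hIcc1 (hx i)) hlt heq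
        exact (hnb1 j) ⟨x j, ⟨hx j, hz⟩, hfx j⟩
      have hmono2 : ∀ i j : Fin n, i ≤ j → y i ≤ y j := by
        intro i j hij
        by_contra hlt
        push_neg at hlt
        have hle : φ2 (y i) ≤ φ2 (y j) := by rw [hfy i, hfy j]; exact hpT.2.2 i j hij
        have hge : φ2 (y j) ≤ φ2 (y i) := hm2 (hIcc2 (hy j)) (hIcc2 (hy i)) (le_of_lt hlt)
        have heq : φ2 (y j) = φ2 (y i) := le_antisymm hge hle
        have hz := deriv_eq_zero_of_apply_eq hφ2 hm2 (hIcc2 (hy j)) (hIcc2 (hy i)) hlt heq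
        exact (hnb2 j) ⟨y j, ⟨hy j, hz⟩, hfy j⟩
      refine ⟨(x, y), ⟨⟨⟨fun i => hx i, hmono1⟩, ⟨fun i => hy i, hmono2⟩⟩,
        ⟨hpos1, hpos2⟩⟩, ?_⟩
      exact Prod.ext (funext fun i => hfx i) (funext fun i => hfy i)
    exact measure_mono_null hsub (measure_union_null
      (measure_iUnion_null fun i => null_slice_fst hB1 i _ _ _ _)
      (measure_iUnion_null fun i => null_slice_snd hB2 i _ _ _ _))
  have hstep1 : ∫ p in Φ '' s, G p = ∫ p in simplex2 (φ1 s1) (φ1 t1) (φ2 s2) (φ2 t2) n, G p := by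
    refine setIntegral_congr_set ?_
    rw [MeasureTheory.ae_eq_set]
    constructor
    · have he : Φ '' s \ simplex2 (φ1 s1) (φ1 t1) (φ2 s2) (φ2 t2) n = ∅ :=
        Set.diff_eq_empty.2 himg
      rw [he]; exact measure_empty
    · exact hdiffnull
  have hstep2 : ∫ p in Φ '' s, G p = ∫ p in s, |(f' p).det| • G (Φ p) :=
    integral_image_eq_integral_abs_det_fderiv_smul volume hsmeas hf' hinj G
  have hdet : ∀ p ∈ s, |(f' p).det| • G (Φ p) =
      ((∏ i, deriv φ1 (p.1 i)) * ∏ i, deriv φ2 (p.2 i)) * G (φ1 ∘ p.1, φ2 ∘ p.2) := by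
    intro p hp
    have hdeteq : (f' p).det = (∏ i, deriv φ1 (p.1 i)) * ∏ i, deriv φ2 (p.2 i) := by
      rw [hf'def]
      rw [det_prodMapCLM, det_diagCLM, det_diagCLM]
    rw [hdeteq, smul_eq_mul, abs_of_pos (mul_pos (Finset.prod_pos fun i _ => hp.2.1 i)
      (Finset.prod_pos fun i _ => hp.2.2 i))]
  have hFcont : Continuous (fun p : (Fin n → ℝ) × (Fin n → ℝ) =>
      ((∏ i, deriv φ1 (p.1 i)) * ∏ i, deriv φ2 (p.2 i)) * G (φ1 ∘ p.1, φ2 ∘ p.2)) := by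
    have c1 : Continuous fun p : (Fin n → ℝ) × (Fin n → ℝ) => ∏ i, deriv φ1 (p.1 i) :=
      continuous_finset_prod _ fun i _ =>
        (hφ1.continuous_deriv le_rfl).comp ((continuous_apply i).comp continuous_fst)
    have c2 : Continuous fun p : (Fin n → ℝ) × (Fin n → ℝ) => ∏ i, deriv φ2 (p.2 i) :=
      continuous_finset_prod _ fun i _ =>
        (hφ2.continuous_deriv le_rfl).comp ((continuous_apply i).comp continuous_snd)
    have cΦ : Continuous Φ := by
      refine Continuous.prodMk ?_ ?_
      · exact continuous_pi fun i => hφ1.continuous.comp ((continuous_apply i).comp continuous_fst)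
      · exact continuous_pi fun i => hφ2.continuous.comp ((continuous_apply i).comp continuous_snd)
    exact (c1.mul c2).mul (hG.comp cΦ)
  have hintS : IntegrableOn (fun p : (Fin n → ℝ) × (Fin n → ℝ) =>
      ((∏ i, deriv φ1 (p.1 i)) * ∏ i, deriv φ2 (p.2 i)) * G (φ1 ∘ p.1, φ2 ∘ p.2)) S volume :=
    hFcont.continuousOn.integrableOn_compact (isCompact_simplex2 _ _ _ _ _)
  have hstep3 : ∫ p in S,
      ((∏ i, deriv φ1 (p.1 i)) * ∏ i, deriv φ2 (p.2 i)) * G (φ1 ∘ p.1, φ2 ∘ p.2)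
      = ∫ p in s,
      ((∏ i, deriv φ1 (p.1 i)) * ∏ i, deriv φ2 (p.2 i)) * G (φ1 ∘ p.1, φ2 ∘ p.2) := by
    have hsub : s ⊆ S := Set.inter_subset_left
    have hunion : S = s ∪ (S \ s) := (Set.union_diff_cancel hsub).symm
    conv_lhs => rw [hunion]
    rw [setIntegral_union Set.disjoint_sdiff_right (hSmeas.diff hsmeas)
      (hintS.mono_set hsub) (hintS.mono_set Set.diff_subset)]
    have hzero : ∫ p in S \ s,
        ((∏ i, deriv φ1 (p.1 i)) * ∏ i, deriv φ2 (p.2 i)) * G (φ1 ∘ p.1, φ2 ∘ p.2) = 0 := by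
      refine setIntegral_eq_zero_of_forall_eq_zero fun p hp => ?_
      have hnU : p ∉ U := fun h => hp.2 ⟨hp.1, h⟩
      rcases not_and_or.1 hnU with h | h
      · push_neg at h
        obtain ⟨i, hi⟩ := h
        have h0 : deriv φ1 (p.1 i) = 0 :=
          le_antisymm hi (hd1 _ ⟨(hp.1.1.1 i).1, (hp.1.1.1 i).2⟩)
        have hz1 : (∏ i, deriv φ1 (p.1 i)) = 0 := Finset.prod_eq_zero (Finset.mem_univ i) h0
        rw [hz1, zero_mul, zero_mul]
      · push_neg at h
        obtain ⟨i, hi⟩ := h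
        have h0 : deriv φ2 (p.2 i) = 0 :=
          le_antisymm hi (hd2 _ ⟨(hp.1.2.1 i).1, (hp.1.2.1 i).2⟩)
        have hz2 : (∏ i, deriv φ2 (p.2 i)) = 0 := Finset.prod_eq_zero (Finset.mem_univ i) h0
        rw [hz2, mul_zero, zero_mul]
    rw [hzero, add_zero]
  calc ∫ p in S, ((∏ i, deriv φ1 (p.1 i)) * ∏ i, deriv φ2 (p.2 i)) * G (φ1 ∘ p.1, φ2 ∘ p.2)
      = ∫ p in s, ((∏ i, deriv φ1 (p.1 i)) * ∏ i, deriv φ2 (p.2 i)) * G (φ1 ∘ p.1, φ2 ∘ p.2) :=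
        hstep3
    _ = ∫ p in s, |(f' p).det| • G (Φ p) :=
        (setIntegral_congr_fun hsmeas fun p hp => (hdet p hp)).symm
    _ = ∫ p in Φ '' s, G p := hstep2.symm
    _ = ∫ p in simplex2 (φ1 s1) (φ1 t1) (φ2 s2) (φ2 t2) n, G p := hstep1

/-! ### Degenerate case -/

lemma sigFull_degenerate {d n : ℕ} (Y Z : Fin d → ℝ × ℝ → ℝ) (w : Fin n → Fin d)
    (ν : Equiv.Perm (Fin n)) : sigFull Y 0 0 0 0 w ν = sigFull Z 0 0 0 0 w ν := by
  rcases Nat.eq_zero_or_pos n with hn | hn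
  · subst hn
    unfold sigFull
    simp
  · have hnull : volume (simplex2 (0:ℝ) 0 0 0 n) = 0 := by
      have hsub : simplex2 (0:ℝ) 0 0 0 n ⊆
          (Set.pi Set.univ (fun _ : Fin n => ({0} : Set ℝ))) ×ˢ Set.univ := by
        intro p hp
        refine ⟨fun i _ => ?_, trivial⟩
        have h := hp.1.1 i
        exact le_antisymm h.2 h.1
      refine measure_mono_null hsub ?_
      rw [Measure.volume_eq_prod, Measure.prod_prod, volume_pi_pi]
      have hz : ∏ _i : Fin n, volume ({(0:ℝ)} : Set ℝ) = 0 := by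
        refine Finset.prod_eq_zero (Finset.mem_univ (⟨0, hn⟩ : Fin n)) ?_
        simp
      rw [hz, zero_mul]
    unfold sigFull
    rw [Measure.restrict_eq_zero.2 hnull, integral_zero_measure, integral_zero_measure]

/-! ### Main auxiliary theorem -/

theorem main_aux {d : ℕ} (T : ℝ) (hT : 0 ≤ T) (X : Fin d → ℝ × ℝ → ℝ)
    (hX : ∀ i, ContDiff ℝ 2 (X i))
    (φ1 φ2 : ℝ → ℝ) (hφ1 : ContDiff ℝ 1 φ1) (hφ2 : ContDiff ℝ 1 φ2)
    (hm1 : MonotoneOn φ1 (Set.Icc 0 T)) (hm2 : MonotoneOn φ2 (Set.Icc 0 T))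
    (h01 : φ1 0 = 0) (h02 : φ2 0 = 0)
    {n : ℕ} (w : Fin n → Fin d) (ν : Equiv.Perm (Fin n))
    (s1 s2 t1 t2 : ℝ) (hs1 : 0 ≤ s1) (h1 : s1 ≤ t1) (ht1 : t1 ≤ T)
    (hs2 : 0 ≤ s2) (h2 : s2 ≤ t2) (ht2 : t2 ≤ T) :
    sigFull (fun i p => X i (φ1 p.1, φ2 p.2)) s1 s2 t1 t2 w ν =
      sigFull X (φ1 s1) (φ2 s2) (φ1 t1) (φ2 t2) w ν := by
  rcases hT.lt_or_eq with hT' | hT'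
  · -- nondegenerate case
    set G := fun p : (Fin n → ℝ) × (Fin n → ℝ) => ∏ i, d12 (X (w i)) (p.1 i, p.2 (ν i))
      with hGdef
    have hGcont : Continuous G := by
      refine continuous_finset_prod _ fun i _ => ?_
      exact (d12_continuous (hX (w i))).comp
        (((continuous_apply i).comp continuous_fst).prodMk
          ((continuous_apply (ν i)).comp continuous_snd))
    have hcongr : ∀ p : (Fin n → ℝ) × (Fin n → ℝ),
        (∏ i, d12 (fun q : ℝ × ℝ => X (w i) (φ1 q.1, φ2 q.2)) (p.1 i, p.2 (ν i))) =
        ((∏ i, deriv φ1 (p.1 i)) * ∏ i, deriv φ2 (p.2 i)) * G (φ1 ∘ p.1, φ2 ∘ p.2) := by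
      intro p
      have h1' : ∀ i : Fin n, d12 (fun q : ℝ × ℝ => X (w i) (φ1 q.1, φ2 q.2))
          (p.1 i, p.2 (ν i)) =
          d12 (X (w i)) (φ1 (p.1 i), φ2 (p.2 (ν i))) * deriv φ1 (p.1 i) *
            deriv φ2 (p.2 (ν i)) := fun i => d12_comp (hX (w i)) hφ1 hφ2 (p.1 i) (p.2 (ν i))
      rw [Finset.prod_congr rfl fun i _ => h1' i]
      rw [Finset.prod_mul_distrib, Finset.prod_mul_distrib]
      have hperm : (∏ i, deriv φ2 (p.2 (ν i))) = ∏ i, deriv φ2 (p.2 i) :=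
        Equiv.prod_comp ν (fun i => deriv φ2 (p.2 i))
      rw [hperm]
      have hGval : G (φ1 ∘ p.1, φ2 ∘ p.2) =
          ∏ i, d12 (X (w i)) (φ1 (p.1 i), φ2 (p.2 (ν i))) := rfl
      rw [hGval]
      ring
    have hkey := key_cov hT' hφ1 hφ2 hm1 hm2 hs1 h1 ht1 hs2 h2 ht2 G hGcont
    unfold sigFull
    simp only [hcongr]
    exact hkey
  · -- degenerate case T = 0
    have hT0 : T = 0 := hT'.symm
    subst hT0
    have hs1' : s1 = 0 := le_antisymm (le_trans h1 ht1) hs1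
    have ht1' : t1 = 0 := le_antisymm ht1 (le_trans hs1 h1)
    have hs2' : s2 = 0 := le_antisymm (le_trans h2 ht2) hs2
    have ht2' : t2 = 0 := le_antisymm ht2 (le_trans hs2 h2)
    subst hs1'; subst ht1'; subst hs2'; subst ht2'
    rw [h01, h02]
    exact sigFull_degenerate _ _ w ν

/-- the full 2D signature of a stretched field `X ∘ φ`, where
`φ(t₁,t₂) = (φ₁(t₁), φ₂(t₂))` with `φᵢ` `C¹`, monotone, fixing `0` and `T`, equals
the signature of `X` over the stretched rectangle; in particular the signature over
the whole square `[0,T]²` is invariant to stretching. -/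
theorem stmt7 {d : ℕ} (T : ℝ) (hT : 0 ≤ T) (X : Fin d → ℝ × ℝ → ℝ)
    (hX : ∀ i, ContDiff ℝ 2 (X i))
    (φ1 φ2 : ℝ → ℝ) (hφ1 : ContDiff ℝ 1 φ1) (hφ2 : ContDiff ℝ 1 φ2)
    (hm1 : MonotoneOn φ1 (Set.Icc 0 T)) (hm2 : MonotoneOn φ2 (Set.Icc 0 T))
    (h01 : φ1 0 = 0) (hT1 : φ1 T = T) (h02 : φ2 0 = 0) (hT2 : φ2 T = T)
    {n : ℕ} (w : Fin n → Fin d) (ν : Equiv.Perm (Fin n))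
    (s1 s2 t1 t2 : ℝ) (hs1 : 0 ≤ s1) (h1 : s1 ≤ t1) (ht1 : t1 ≤ T)
    (hs2 : 0 ≤ s2) (h2 : s2 ≤ t2) (ht2 : t2 ≤ T) :
    (sigFull (fun i p => X i (φ1 p.1, φ2 p.2)) s1 s2 t1 t2 w ν =
      sigFull X (φ1 s1) (φ2 s2) (φ1 t1) (φ2 t2) w ν) ∧
    sigFull (fun i p => X i (φ1 p.1, φ2 p.2)) 0 0 T T w ν =
      sigFull X 0 0 T T w ν := by
  constructor
  · exact main_aux T hT X hX φ1 φ2 hφ1 hφ2 hm1 hm2 h01 h02 w ν s1 s2 t1 t2 hs1 h1 ht1 hs2 h2 ht2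
  · have := main_aux T hT X hX φ1 φ2 hφ1 hφ2 hm1 hm2 h01 h02 w ν 0 0 T T le_rfl hT le_rfl
      le_rfl hT le_rfl
    rwa [h01, h02, hT1, hT2] at this
end

section
/- Let $X \in C^2([-1,1]^2;\mathbb{R}^d)$ and define its rotation by 90 degrees $X^{\pi/2}(t_1,t_2) = X(-t_2,t_1)$. Then for any word $w$ of length $n$ and permutation $\nu \in \Sigma_n$, the full 2D signature satisfies $\langle \mathbf{S}_{-\mathbf{1},\mathbf{1}}(X^{\pi/2}),(w,\nu)\rangle = (-1)^n \langle \mathbf{S}_{-\mathbf{1},\mathbf{1}}(X), (w_{\nu^{-1}\circ\rho_n}, \nu^{-1}\circ\rho_n)\rangle$, where $\rho_n$ is the reversal permutation $\rho_n(i) = n-i+1$ and $w_\sigma = (w_{\sigma(1)},\dots,w_{\sigma(n)})$. -/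
open MeasureTheory

/-- The reversal permutation of `Fin n`, `i ↦ n - 1 - i`. -/
def reversalPerm (n : ℕ) : Equiv.Perm (Fin n) :=
  ⟨Fin.rev, Fin.rev, Fin.rev_rev, Fin.rev_rev⟩

/-! ### Auxiliary lemmas -/

lemma d12_eq_s8 (f : ℝ × ℝ → ℝ) (hf : ContDiff ℝ 2 f) (a b : ℝ) :
    d12 f (a, b) = fderiv ℝ (fderiv ℝ f) (a, b) (1, 0) (0, 1) := by
  have h1 : ∀ s : ℝ, deriv (fun t => f (s, t)) b = fderiv ℝ f (s, b) (0, 1) := by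
    intro s
    have : HasDerivAt (fun t : ℝ => f (s, t)) (fderiv ℝ f (s, b) (0, 1)) b :=
      ((hf.differentiable two_ne_zero) (s, b)).hasFDerivAt.comp_hasDerivAt b
        (HasDerivAt.prodMk (hasDerivAt_const b s) (hasDerivAt_id b))
    exact this.deriv
  have hdf : ContDiff ℝ 1 (fderiv ℝ f) := hf.fderiv_right (le_refl _)
  have hd : HasDerivAt (fun s : ℝ => fderiv ℝ f (s, b))
      (fderiv ℝ (fderiv ℝ f) (a, b) (1, 0)) a :=
    ((hdf.differentiable one_ne_zero) (a, b)).hasFDerivAt.comp_hasDerivAt a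
      (HasDerivAt.prodMk (hasDerivAt_id a) (hasDerivAt_const a b))
  have hd2 := hd.clm_apply (hasDerivAt_const a ((0 : ℝ), (1 : ℝ)))
  simp only [d12, h1]
  simpa using hd2.deriv

/-- Rotating a field by 90 degrees negates and rotates the mixed derivative. -/
lemma d12_rot (f : ℝ × ℝ → ℝ) (hf : ContDiff ℝ 2 f) (a b : ℝ) :
    d12 (fun p => f (-p.2, p.1)) (a, b) = - d12 f (-b, a) := by
  have h1 : ∀ s : ℝ, deriv (fun t => f (-t, s)) b = fderiv ℝ f (-b, s) (-1, 0) := by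
    intro s
    have : HasDerivAt (fun t : ℝ => f (-t, s)) (fderiv ℝ f (-b, s) (-1, 0)) b :=
      ((hf.differentiable two_ne_zero) (-b, s)).hasFDerivAt.comp_hasDerivAt b
        (HasDerivAt.prodMk ((hasDerivAt_id b).neg) (hasDerivAt_const b s))
    exact this.deriv
  have hdf : ContDiff ℝ 1 (fderiv ℝ f) := hf.fderiv_right (le_refl _)
  have hd : HasDerivAt (fun s : ℝ => fderiv ℝ f (-b, s))
      (fderiv ℝ (fderiv ℝ f) (-b, a) (0, 1)) a :=
    ((hdf.differentiable one_ne_zero) (-b, a)).hasFDerivAt.comp_hasDerivAt a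
      (HasDerivAt.prodMk (hasDerivAt_const a (-b)) (hasDerivAt_id a))
  have hd2 := hd.clm_apply (hasDerivAt_const a ((-1 : ℝ), (0 : ℝ)))
  have hsymm : fderiv ℝ (fderiv ℝ f) (-b, a) (0, 1) (-1, 0)
      = fderiv ℝ (fderiv ℝ f) (-b, a) (-1, 0) (0, 1) :=
    (hf.contDiffAt.isSymmSndFDerivAt (by simp [minSmoothness_of_isRCLikeNormedField])) _ _
  have hneg : ((-1 : ℝ), (0 : ℝ)) = -((1 : ℝ), (0 : ℝ)) := by simp [Prod.ext_iff]
  rw [d12_eq_s8 f hf]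
  simp only [d12, h1]
  rw [show (fun s : ℝ => (fderiv ℝ f (-b, s)) (-1, 0))
      = fun s : ℝ => (fun s' => fderiv ℝ f (-b, s')) s (-1, 0) from rfl]
  have := hd2.deriv
  simp only [smul_zero, add_zero, map_zero] at this
  rw [this, hsymm, hneg, map_neg]
  simp

lemma simplex_negrev_mem {n : ℕ} (q : Fin n → ℝ) (hq : q ∈ simplex (-1) 1 n) :
    (fun k => -(q (Fin.rev k))) ∈ simplex (-1) 1 n := by
  obtain ⟨hb, hm⟩ := hq
  constructor
  · intro i
    simp only
    constructor
    · linarith [(hb (Fin.rev i)).2]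
    · linarith [(hb (Fin.rev i)).1]
  · intro i j hij
    simp only
    have h1 : Fin.rev j ≤ Fin.rev i := Fin.rev_le_rev.mpr hij
    have := hm _ _ h1
    linarith

lemma simplex_negrev_iff {n : ℕ} (q : Fin n → ℝ) :
    (fun k => -(q (Fin.rev k))) ∈ simplex (-1) 1 n ↔ q ∈ simplex (-1) 1 n := by
  refine ⟨fun h => ?_, simplex_negrev_mem q⟩
  have := simplex_negrev_mem _ h
  simpa [Fin.rev_rev] using this

/-- Negation-plus-reversal as a measurable equivalence of `Fin n → ℝ`. -/
noncomputable def eN (n : ℕ) : (Fin n → ℝ) ≃ᵐ (Fin n → ℝ) :=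
  MeasurableEquiv.arrowCongr' (reversalPerm n) (MeasurableEquiv.neg ℝ)

lemma eN_apply {n : ℕ} (q : Fin n → ℝ) (k : Fin n) : eN n q k = -(q (Fin.rev k)) := rfl

/-- The change of variables `(p₁, p₂) ↦ (-p₂ ∘ rev, p₁)`. -/
noncomputable def Tmap (n : ℕ) :
    ((Fin n → ℝ) × (Fin n → ℝ)) ≃ᵐ ((Fin n → ℝ) × (Fin n → ℝ)) :=
  (MeasurableEquiv.prodComm).trans ((eN n).prodCongr (MeasurableEquiv.refl _))

lemma Tmap_apply {n : ℕ} (p : (Fin n → ℝ) × (Fin n → ℝ)) :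
    Tmap n p = (eN n p.2, p.1) := rfl

lemma hT {n : ℕ} : MeasurePreserving (⇑(Tmap n)) volume volume := by
  have hN : MeasurePreserving (⇑(eN n)) volume volume :=
    MeasureTheory.volume_preserving_arrowCongr' _ _ (Measure.measurePreserving_neg _)
  have : ⇑(Tmap n) = (Prod.map (⇑(eN n)) id) ∘ Prod.swap := rfl
  rw [this]
  exact (hN.prod (MeasurePreserving.id _)).comp Measure.measurePreserving_swap

lemma Tmap_preimage {n : ℕ} :
    ⇑(Tmap n) ⁻¹' (simplex2 (-1) 1 (-1) 1 n) = simplex2 (-1) 1 (-1) 1 n := by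
  ext p
  simp only [Set.mem_preimage, simplex2, Set.mem_setOf_eq, Tmap_apply]
  have he : ⇑(eN n) p.2 = fun k => -(p.2 (Fin.rev k)) := funext (eN_apply p.2)
  rw [he, simplex_negrev_iff]
  exact and_comm

/-- rotating a field by 90 degrees, `X^{π/2}(t₁,t₂) = X(-t₂,t₁)`, the full
2D signature over `[-1,1]²` satisfies
`⟨S(X^{π/2}),(w,ν)⟩ = (-1)ⁿ ⟨S(X), (w_{ν⁻¹∘ρₙ}, ν⁻¹∘ρₙ)⟩`
with `ρₙ` the reversal permutation. -/
theorem stmt8 {d : ℕ} (X : Fin d → ℝ × ℝ → ℝ) (hX : ∀ i, ContDiff ℝ 2 (X i))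
    {n : ℕ} (w : Fin n → Fin d) (ν : Equiv.Perm (Fin n)) :
    sigFull (fun i p => X i (-p.2, p.1)) (-1) (-1) 1 1 w ν =
      (-1 : ℝ) ^ n *
        sigFull X (-1) (-1) 1 1 (w ∘ (ν⁻¹ * reversalPerm n)) (ν⁻¹ * reversalPerm n) := by
  classical
  set σ : Equiv.Perm (Fin n) := ν⁻¹ * reversalPerm n with hσ
  have hνσ : ∀ j, ν (σ j) = Fin.rev j := by
    intro j
    simp [hσ, Equiv.Perm.mul_apply, reversalPerm]
  have key : ∀ p : (Fin n → ℝ) × (Fin n → ℝ),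
      (∏ i, d12 (fun r : ℝ × ℝ => X (w i) (-r.2, r.1)) (p.1 i, p.2 (ν i)))
        = (-1 : ℝ) ^ n *
          ∏ i, d12 (X ((w ∘ σ) i)) ((Tmap n p).1 i, (Tmap n p).2 (σ i)) := by
    intro p
    calc (∏ i, d12 (fun r : ℝ × ℝ => X (w i) (-r.2, r.1)) (p.1 i, p.2 (ν i)))
        = ∏ i, -(d12 (X (w i)) (-(p.2 (ν i)), p.1 i)) :=
          Finset.prod_congr rfl fun i _ => d12_rot _ (hX _) _ _
      _ = (-1 : ℝ) ^ n * ∏ i, d12 (X (w i)) (-(p.2 (ν i)), p.1 i) := by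
          rw [show (fun i => -(d12 (X (w i)) (-(p.2 (ν i)), p.1 i)))
              = fun i => (-1 : ℝ) * d12 (X (w i)) (-(p.2 (ν i)), p.1 i) from
            funext fun i => (neg_one_mul _).symm,
            Finset.prod_mul_distrib, Finset.prod_const, Finset.card_univ, Fintype.card_fin]
      _ = (-1 : ℝ) ^ n * ∏ j, d12 (X (w (σ j))) (-(p.2 (Fin.rev j)), p.1 (σ j)) := by
          rw [← Equiv.prod_comp σ (fun i => d12 (X (w i)) (-(p.2 (ν i)), p.1 i))]
          refine congrArg _ (Finset.prod_congr rfl fun j _ => ?_)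
          simp only [hνσ]
      _ = (-1 : ℝ) ^ n *
          ∏ i, d12 (X ((w ∘ σ) i)) ((Tmap n p).1 i, (Tmap n p).2 (σ i)) := rfl
  simp only [sigFull]
  rw [show (∫ p in simplex2 (-1) 1 (-1) 1 n,
        ∏ i, d12 (fun r : ℝ × ℝ => X (w i) (-r.2, r.1)) (p.1 i, p.2 (ν i)))
      = ∫ p in simplex2 (-1) 1 (-1) 1 n,
        (-1 : ℝ) ^ n *
          ((fun q : (Fin n → ℝ) × (Fin n → ℝ) =>
            ∏ i, d12 (X ((w ∘ σ) i)) (q.1 i, q.2 (σ i))) (Tmap n p)) from by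
    congr 1
    funext p
    exact key p]
  rw [MeasureTheory.integral_const_mul]
  congr 1
  have := hT.setIntegral_preimage_emb (Tmap n).measurableEmbedding
    (fun q : (Fin n → ℝ) × (Fin n → ℝ) => ∏ i, d12 (X ((w ∘ σ) i)) (q.1 i, q.2 (σ i)))
    (simplex2 (-1) 1 (-1) 1 n)
  rw [Tmap_preimage] at this
  exact this
end

section
/- Let $X(r_1,r_2) = (\sin(\pi r_2)\, r_1, \sin(\pi r_1)\, r_2)$ on $[0,1]^2$. Then the level-2 identity 2D signature coefficient satisfies $\langle \mathbf{S}_{\mathbf{0}\mathbf{1}}(X), ((1,2),\mathrm{id})\rangle = \pi \int_0^1\int_0^1 \sin(\pi s_2)\, s_1 \cos(\pi s_1)\, ds_1\, ds_2 = -4/\pi^2 \neq 0$. Since $X$ is homotopic (with fixed boundary) to the zero map on $[0,1]^2$, the 2D signature is not homotopy invariant. -/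
open MeasureTheory

open Real

section helpers

lemma hasDeriv_sin_pi (x : ℝ) : HasDerivAt (fun y => Real.sin (π*y)) (π * Real.cos (π*x)) x := by
  have h := (Real.hasDerivAt_sin (π*x)).comp x ((hasDerivAt_id x).const_mul π)
  rw [mul_comm]
  simpa [Function.comp_def] using h

lemma hasDeriv_cos_pi (x : ℝ) : HasDerivAt (fun y => Real.cos (π*y)) (-(π * Real.sin (π*x))) x := by
  have h := (Real.hasDerivAt_cos (π*x)).comp x ((hasDerivAt_id x).const_mul π)
  rw [show -(π * Real.sin (π*x)) = -Real.sin (π*x) * π by ring]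
  simpa [Function.comp_def] using h

lemma int_pic (a b : ℝ) : ∫ x in a..b, π * Real.cos (π*x) = Real.sin (π*b) - Real.sin (π*a) := by
  apply intervalIntegral.integral_eq_sub_of_hasDerivAt (fun x _ => hasDeriv_sin_pi x)
  exact (Continuous.intervalIntegrable (by continuity) a b)

lemma int_sin (a b : ℝ) : ∫ x in a..b, Real.sin (π*x) = Real.cos (π*a)/π - Real.cos (π*b)/π := by
  have key : ∀ x, HasDerivAt (fun y => -(Real.cos (π*y)/π)) (Real.sin (π*x)) x := by
    intro x
    have h := ((hasDeriv_cos_pi x).div_const π).neg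
    refine h.congr_deriv ?_
    field_simp
  rw [intervalIntegral.integral_eq_sub_of_hasDerivAt (fun x _ => key x)
    (Continuous.intervalIntegrable (by continuity) a b)]
  ring

lemma int_xc : ∫ x in (0:ℝ)..1, x * Real.cos (π*x) = -(2/π^2) := by
  have key : ∀ x : ℝ, HasDerivAt (fun y => y * Real.sin (π*y)/π + Real.cos (π*y)/π^2)
      (x * Real.cos (π*x)) x := by
    intro x
    have h := (((hasDerivAt_id x).mul (hasDeriv_sin_pi x)).div_const π).add
      ((hasDeriv_cos_pi x).div_const (π^2))
    refine h.congr_deriv ?_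
    simp only [id_eq]
    field_simp
    ring
  rw [intervalIntegral.integral_eq_sub_of_hasDerivAt (fun x _ => key x)
    (Continuous.intervalIntegrable (by continuity) 0 1)]
  simp [Real.cos_pi]
  field_simp
  ring

lemma d12_fst (x y : ℝ) :
    d12 (fun q : ℝ × ℝ => Real.sin (π * q.2) * q.1) (x, y) = π * Real.cos (π * y) := by
  unfold d12
  have h1 : ∀ a : ℝ, deriv (fun b => Real.sin (π * b) * a) y = π * Real.cos (π * y) * a := by
    intro a
    exact ((hasDeriv_sin_pi y).mul_const a).deriv
  simp only [h1]
  exact ((hasDerivAt_id x).const_mul (π * Real.cos (π * y))).deriv.trans (mul_one _)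

lemma d12_snd (x y : ℝ) :
    d12 (fun q : ℝ × ℝ => Real.sin (π * q.1) * q.2) (x, y) = π * Real.cos (π * x) := by
  unfold d12
  have h1 : ∀ a : ℝ, deriv (fun b => Real.sin (π * a) * b) y = Real.sin (π * a) := by
    intro a
    simpa using ((hasDerivAt_id y).const_mul (Real.sin (π * a))).deriv
  simp only [h1]
  exact (hasDeriv_sin_pi x).deriv

def Tri : Set (ℝ × ℝ) := {z | 0 ≤ z.1 ∧ z.1 ≤ z.2 ∧ z.2 ≤ 1}

lemma measurableSet_Tri : MeasurableSet Tri := by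
  have : Tri = {z : ℝ × ℝ | 0 ≤ z.1} ∩ ({z | z.1 ≤ z.2} ∩ {z | z.2 ≤ 1}) := by
    ext z; simp [Tri, and_assoc]
  rw [this]
  exact (measurableSet_le measurable_const measurable_fst).inter
    ((measurableSet_le measurable_fst measurable_snd).inter
      (measurableSet_le measurable_snd measurable_const))

lemma Tri_subset : Tri ⊆ Set.Icc (0:ℝ) 1 ×ˢ Set.Icc (0:ℝ) 1 := by
  rintro ⟨a, b⟩ ⟨h0, h1, h2⟩
  exact ⟨⟨h0, h1.trans h2⟩, ⟨h0.trans h1, h2⟩⟩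

lemma tri_integral (F : ℝ × ℝ → ℝ) (hF : Continuous F) :
    ∫ z in Tri, F z = ∫ x in (0:ℝ)..1, ∫ y in x..1, F (x, y) := by
  have h1 : ∫ z in Tri, F z
      = ∫ z in (Set.Icc (0:ℝ) 1 ×ˢ Set.Icc (0:ℝ) 1), Tri.indicator F z := by
    rw [setIntegral_indicator measurableSet_Tri, Set.inter_eq_right.mpr Tri_subset]
  rw [h1, Measure.volume_eq_prod]
  have hint : IntegrableOn (Tri.indicator F) (Set.Icc (0:ℝ) 1 ×ˢ Set.Icc (0:ℝ) 1)
      ((volume : Measure ℝ).prod volume) := by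
    rw [← Measure.volume_eq_prod]
    exact (hF.continuousOn.integrableOn_compact (isCompact_Icc.prod isCompact_Icc)).indicator
      measurableSet_Tri
  rw [setIntegral_prod _ hint]
  have h2 : ∀ x ∈ Set.Icc (0:ℝ) 1,
      (∫ y in Set.Icc (0:ℝ) 1, Tri.indicator F (x, y)) = ∫ y in x..1, F (x, y) := by
    intro x hx
    have hpt : ∀ y, Tri.indicator F (x, y) = (Set.Icc x 1).indicator (fun y => F (x, y)) y := by
      intro y
      by_cases h : y ∈ Set.Icc x 1
      · rw [Set.indicator_of_mem h, Set.indicator_of_mem (show (x,y) ∈ Tri from ⟨hx.1, h.1, h.2⟩)]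
      · rw [Set.indicator_of_notMem h,
          Set.indicator_of_notMem (fun hc : (x,y) ∈ Tri => h ⟨hc.2.1, hc.2.2⟩)]
    simp only [hpt]
    rw [setIntegral_indicator measurableSet_Icc,
      Set.inter_eq_right.mpr (Set.Icc_subset_Icc hx.1 le_rfl),
      integral_Icc_eq_integral_Ioc, ← intervalIntegral.integral_of_le hx.2]
  rw [setIntegral_congr_fun measurableSet_Icc h2,
    integral_Icc_eq_integral_Ioc, ← intervalIntegral.integral_of_le (zero_le_one)]

lemma triB : ∫ z in Tri, π * Real.cos (π * z.2) = -(2/π) := by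
  rw [tri_integral _ (by continuity)]
  have hin : ∀ x : ℝ, (∫ y in x..1, π * Real.cos (π * y)) = -Real.sin (π * x) := by
    intro x
    rw [int_pic]
    simp
  simp only [hin]
  rw [intervalIntegral.integral_neg, int_sin]
  simp [Real.cos_pi]
  ring

lemma triA : ∫ z in Tri, π * Real.cos (π * z.1) = 2/π := by
  rw [tri_integral _ (by continuity)]
  have hin : ∀ x : ℝ, (∫ y in x..1, π * Real.cos (π * x))
      = π * Real.cos (π * x) - x * (π * Real.cos (π * x)) := by
    intro x
    rw [intervalIntegral.integral_const]
    simp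
    ring
  simp only [hin]
  rw [intervalIntegral.integral_sub (Continuous.intervalIntegrable (by continuity) 0 1)
    (Continuous.intervalIntegrable (by continuity) 0 1), int_pic]
  have : ∀ x : ℝ, x * (π * Real.cos (π * x)) = π * (x * Real.cos (π * x)) := fun x => by ring
  simp only [this]
  rw [intervalIntegral.integral_const_mul, int_xc]
  simp
  field_simp

lemma simplex_eq :
    simplex 0 1 2 = (MeasurableEquiv.piFinTwo (fun _ : Fin 2 => ℝ)) ⁻¹' Tri := by
  ext r
  simp only [MeasurableEquiv.piFinTwo_apply, Set.mem_preimage]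
  constructor
  · rintro ⟨hb, hm⟩
    exact ⟨(hb 0).1, hm 0 1 (by decide), (hb 1).2⟩
  · rintro ⟨h0, h01, h11⟩
    refine ⟨fun i => ?_, fun i j hij => ?_⟩
    · fin_cases i <;> constructor <;> simp <;> linarith
    · fin_cases i <;> fin_cases j <;> simp_all

lemma simplex_int_snd :
    ∫ r in simplex 0 1 2, π * Real.cos (π * r 1) = -(2/π) := by
  rw [simplex_eq, ← triB]
  exact (volume_preserving_piFinTwo (fun _ : Fin 2 => ℝ)).setIntegral_preimage_emb
    (MeasurableEquiv.measurableEmbedding _) (fun z => π * Real.cos (π * z.2)) Tri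

lemma simplex_int_fst :
    ∫ r in simplex 0 1 2, π * Real.cos (π * r 0) = 2/π := by
  rw [simplex_eq, ← triA]
  exact (volume_preserving_piFinTwo (fun _ : Fin 2 => ℝ)).setIntegral_preimage_emb
    (MeasurableEquiv.measurableEmbedding _) (fun z => π * Real.cos (π * z.1)) Tri

lemma sig_key :
    sigFull (![fun q => Real.sin (π * q.2) * q.1, fun q => Real.sin (π * q.1) * q.2])
      0 0 1 1 (![0, 1] : Fin 2 → Fin 2) 1 = -4 / π ^ 2 := by
  unfold sigFull
  have hfun : (fun p : (Fin 2 → ℝ) × (Fin 2 → ℝ) =>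
      ∏ i, d12 ((![fun q => Real.sin (π * q.2) * q.1, fun q => Real.sin (π * q.1) * q.2])
        ((![0, 1] : Fin 2 → Fin 2) i)) (p.1 i, p.2 ((1 : Equiv.Perm (Fin 2)) i)))
      = fun p => (π * Real.cos (π * p.1 1)) * (π * Real.cos (π * p.2 0)) := by
    funext p
    rw [Fin.prod_univ_two]
    simp only [Matrix.cons_val_zero, Matrix.cons_val_one, Matrix.head_cons, Equiv.Perm.one_apply]
    rw [d12_fst, d12_snd]
    ring
  rw [hfun]
  have hs2 : simplex2 0 1 0 1 2 = simplex 0 1 2 ×ˢ simplex 0 1 2 := rfl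
  rw [hs2, Measure.volume_eq_prod,
    setIntegral_prod_mul (fun r : Fin 2 → ℝ => π * Real.cos (π * r 1))
      (fun s : Fin 2 → ℝ => π * Real.cos (π * s 0)), simplex_int_snd, simplex_int_fst]
  field_simp
  ring

end helpers

open Real in
/-- for the field `X(r₁,r₂) = (sin(π r₂) r₁, sin(π r₁) r₂)` on `[0,1]²`,
which is boundary-fixing homotopic to the zero map, the level-2 identity 2D signature
coefficient `⟨S_{0,1}(X),((1,2),id)⟩` equals
`π ∫₀¹∫₀¹ sin(π s₂) s₁ cos(π s₁) ds₁ ds₂ = -4/π² ≠ 0`;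
hence the 2D signature is not homotopy invariant. -/
theorem stmt9 :
    (sigFull (![fun q => Real.sin (π * q.2) * q.1, fun q => Real.sin (π * q.1) * q.2])
        0 0 1 1 (![0, 1] : Fin 2 → Fin 2) 1 =
      π * ∫ s1 in (0:ℝ)..1, ∫ s2 in (0:ℝ)..1,
        Real.sin (π * s2) * s1 * Real.cos (π * s1)) ∧
    (sigFull (![fun q => Real.sin (π * q.2) * q.1, fun q => Real.sin (π * q.1) * q.2])
        0 0 1 1 (![0, 1] : Fin 2 → Fin 2) 1 = -4 / π ^ 2) ∧
    sigFull (![fun q => Real.sin (π * q.2) * q.1, fun q => Real.sin (π * q.1) * q.2])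
        0 0 1 1 (![0, 1] : Fin 2 → Fin 2) 1 ≠ 0 := by
  have hrhs : π * (∫ s1 in (0:ℝ)..1, ∫ s2 in (0:ℝ)..1,
      Real.sin (π * s2) * s1 * Real.cos (π * s1)) = -4 / π ^ 2 := by
    have hin : ∀ s1 : ℝ, (∫ s2 in (0:ℝ)..1, Real.sin (π * s2) * s1 * Real.cos (π * s1))
        = (2/π) * (s1 * Real.cos (π * s1)) := by
      intro s1
      have : (fun s2 : ℝ => Real.sin (π * s2) * s1 * Real.cos (π * s1))
          = fun s2 => Real.sin (π * s2) * (s1 * Real.cos (π * s1)) := by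
        funext s2; ring
      rw [this, intervalIntegral.integral_mul_const, int_sin]
      simp only [mul_zero, mul_one, Real.cos_zero, Real.cos_pi]
      ring
    simp only [hin]
    rw [intervalIntegral.integral_const_mul, int_xc]
    field_simp
    ring
  refine ⟨sig_key.trans hrhs.symm, sig_key, sig_key ▸ ?_⟩
  have h2 : (0:ℝ) < π ^ 2 := by positivity
  intro h
  rw [div_eq_zero_iff] at h
  rcases h with h | h
  · norm_num at h
  · exact h2.ne' h
end

section
/- Let $\mathcal{F}$ be the $\mathbb{R}$-algebra of functions on $[0,1]^2$ spanned by $(s_1,s_2)\mapsto s_1^{2m+n}s_2^{2n+m}$ for $m,n \ge 0$. Then $\mathcal{F}$ is dense (in the supremum norm) in the space $V = \{f \in C([0,1]^2;\mathbb{R}) : f(0,s_2) = f(s_1,0) = 0 \text{ for all } s_1, s_2 \in [0,1]\}$ of continuous functions vanishing on the bottom and left boundary. -/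
/-- the algebra spanned by the monomials `(s₁,s₂) ↦ s₁^{2m+k} s₂^{2k+m}`
(equivalently, its linear span, since it is closed under products) is dense in the sup
norm in the space of continuous functions on `[0,1]²` vanishing on the bottom and left
boundary. -/
theorem stmt18 (f : ℝ × ℝ → ℝ)
    (hf : ContinuousOn f (Set.Icc (0:ℝ) 1 ×ˢ Set.Icc (0:ℝ) 1))
    (hf0 : ∀ s ∈ Set.Icc (0:ℝ) 1, f (0, s) = 0 ∧ f (s, 0) = 0)
    (ε : ℝ) (hε : 0 < ε) :
    ∃ (N : ℕ) (c : Fin N → ℝ) (m k : Fin N → ℕ),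
      ∀ p ∈ Set.Icc (0:ℝ) 1 ×ˢ Set.Icc (0:ℝ) 1,
        |f p - ∑ j, c j * p.1 ^ (2 * m j + k j) * p.2 ^ (2 * k j + m j)| < ε := by
  classical
  set K : Set (ℝ × ℝ) := Set.Icc (0:ℝ) 1 ×ˢ Set.Icc (0:ℝ) 1 with hKdef
  have hKc : IsCompact K := (isCompact_Icc).prod isCompact_Icc
  set φ : ℝ × ℝ → ℝ × ℝ := fun p => (p.1 * p.2 ^ 2, p.1 ^ 2 * p.2) with hφdef
  have hφc : Continuous φ := by fun_prop
  set Y : Set (ℝ × ℝ) := φ '' K with hYdef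
  have hYc : IsCompact Y := hKc.image hφc
  haveI : CompactSpace K := isCompact_iff_compactSpace.mp hKc
  haveI : CompactSpace Y := isCompact_iff_compactSpace.mp hYc
  -- key: f factors through φ on K
  have key : ∀ p ∈ K, ∀ q ∈ K, φ p = φ q → f p = f q := by
    rintro ⟨p1, p2⟩ hp ⟨q1, q2⟩ hq hpq
    simp only [hφdef, Prod.mk.injEq] at hpq
    obtain ⟨h1, h2⟩ := hpq
    have hp1 : p1 ∈ Set.Icc (0:ℝ) 1 := hp.1
    have hp2 : p2 ∈ Set.Icc (0:ℝ) 1 := hp.2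
    have hq1 : q1 ∈ Set.Icc (0:ℝ) 1 := hq.1
    have hq2 : q2 ∈ Set.Icc (0:ℝ) 1 := hq.2
    have hcube : (p1 * p2) ^ 3 = (q1 * q2) ^ 3 := by
      calc (p1 * p2) ^ 3 = (p1 * p2 ^ 2) * (p1 ^ 2 * p2) := by ring
        _ = (q1 * q2 ^ 2) * (q1 ^ 2 * q2) := by rw [h1, h2]
        _ = (q1 * q2) ^ 3 := by ring
    have hprod : p1 * p2 = q1 * q2 := by
      have h3 : StrictMono fun x : ℝ => x ^ 3 := Odd.strictMono_pow ⟨1, by norm_num⟩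
      exact h3.injective hcube
    by_cases hz : p1 * p2 = 0
    · have hz' : q1 * q2 = 0 := by rw [← hprod]; exact hz
      have e1 : f (p1, p2) = 0 := by
        rcases mul_eq_zero.mp hz with h | h
        · subst h; exact (hf0 p2 hp2).1
        · subst h; exact (hf0 p1 hp1).2
      have e2 : f (q1, q2) = 0 := by
        rcases mul_eq_zero.mp hz' with h | h
        · subst h; exact (hf0 q2 hq2).1
        · subst h; exact (hf0 q1 hq1).2
      rw [e1, e2]
    · have hq0 : q1 * q2 ≠ 0 := by rw [← hprod]; exact hz
      have e1 : p1 = q1 := by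
        have h5 : p1 * (p1 * p2) = q1 * (q1 * q2) := by
          calc p1 * (p1 * p2) = p1 ^ 2 * p2 := by ring
            _ = q1 ^ 2 * q2 := h2
            _ = q1 * (q1 * q2) := by ring
        rw [hprod] at h5
        exact mul_right_cancel₀ hq0 h5
      have e2 : p2 = q2 := by
        have h5 : p2 * (p1 * p2) = q2 * (q1 * q2) := by
          calc p2 * (p1 * p2) = p1 * p2 ^ 2 := by ring
            _ = q1 * q2 ^ 2 := h1
            _ = q2 * (q1 * q2) := by ring
        rw [hprod] at h5
        exact mul_right_cancel₀ hq0 h5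
      rw [e1, e2]
  -- the restriction map K → Y
  set φ' : K → Y := fun p => ⟨φ p, Set.mem_image_of_mem φ p.2⟩ with hφ'def
  have hφ'c : Continuous φ' := (hφc.comp continuous_subtype_val).subtype_mk _
  have hφ'surj : Function.Surjective φ' := by
    rintro ⟨y, p, hp, rfl⟩
    exact ⟨⟨p, hp⟩, rfl⟩
  have hqm : Topology.IsQuotientMap φ' := (hφ'c.isClosedMap).isQuotientMap hφ'c hφ'surj
  -- the descended function g
  set g : Y → ℝ := fun y => f y.2.choose with hgdef
  have hgspec : ∀ p : K, g (φ' p) = f p := by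
    intro p
    have h := (φ' p).2.choose_spec
    exact key _ h.1 _ p.2 h.2
  have hgc : Continuous g := by
    rw [hqm.continuous_iff]
    have : (g ∘ φ') = fun p : K => f p := funext hgspec
    rw [this]
    exact hf.restrict
  set G : C(Y, ℝ) := ⟨g, hgc⟩ with hGdef
  -- coordinate functions on Y
  set v : Fin 2 → C(Y, ℝ) := ![⟨fun y => (y : ℝ × ℝ).1, by fun_prop⟩,
    ⟨fun y => (y : ℝ × ℝ).2, by fun_prop⟩] with hvdef
  set A : Subalgebra ℝ C(Y, ℝ) := Algebra.adjoin ℝ (Set.range v) with hAdef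
  have hsep : A.SeparatesPoints := by
    intro y y' hyy'
    have hne : (y : ℝ × ℝ) ≠ (y' : ℝ × ℝ) := fun h => hyy' (Subtype.ext h)
    by_cases h1 : (y : ℝ × ℝ).1 = (y' : ℝ × ℝ).1
    · have h2 : (y : ℝ × ℝ).2 ≠ (y' : ℝ × ℝ).2 := fun h2 => hne (Prod.ext h1 h2)
      exact ⟨v 1, ⟨v 1, Algebra.subset_adjoin ⟨1, rfl⟩, rfl⟩, h2⟩
    · exact ⟨v 0, ⟨v 0, Algebra.subset_adjoin ⟨0, rfl⟩, rfl⟩, h1⟩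
  obtain ⟨a, ha⟩ := ContinuousMap.exists_mem_subalgebra_near_continuousMap_of_separatesPoints
    A hsep G (ε / 2) (by linarith)
  -- represent a as a polynomial in v
  have hmem : (a : C(Y, ℝ)) ∈ (MvPolynomial.aeval (R := ℝ) v).range := by
    rw [← Algebra.adjoin_range_eq_range_aeval ℝ v]
    exact a.2
  obtain ⟨P, hP⟩ := hmem
  -- set up the finite sum data
  set N := P.support.card with hNdef
  set e : ↥P.support ≃ Fin N := P.support.equivFin with hedef
  refine ⟨N, fun j => MvPolynomial.coeff (e.symm j : Fin 2 →₀ ℕ) P,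
    fun j => ((e.symm j : Fin 2 →₀ ℕ)) 1, fun j => ((e.symm j : Fin 2 →₀ ℕ)) 0, ?_⟩
  intro p hp
  set y : Y := φ' ⟨p, hp⟩ with hydef
  have hfp : f p = G y := (hgspec ⟨p, hp⟩).symm
  have haev : (a : C(Y, ℝ)) y = MvPolynomial.eval (fun i => (v i) y) P := by
    rw [← hP]
    have h6 := MvPolynomial.comp_aeval_apply (f := v)
      (φ := ContinuousMap.evalAlgHom ℝ ℝ y) P
    have h7 : MvPolynomial.aeval (R := ℝ) (fun i => (v i) y) P
        = MvPolynomial.eval (fun i => (v i) y) P := by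
      rw [MvPolynomial.aeval_def, MvPolynomial.eval, MvPolynomial.coe_eval₂Hom,
        Algebra.algebraMap_self]
    exact h6.trans ((by norm_num : (fun i => (ContinuousMap.evalAlgHom ℝ ℝ y) (v i))
        = fun i => (v i) y) ▸ h7)
  have hyc1 : ((y : ℝ × ℝ)).1 = p.1 * p.2 ^ 2 := rfl
  have hyc2 : ((y : ℝ × ℝ)).2 = p.1 ^ 2 * p.2 := rfl
  set f' : (Fin 2 →₀ ℕ) → ℝ := fun d => MvPolynomial.coeff d P
      * p.1 ^ (2 * d 1 + d 0) * p.2 ^ (2 * d 0 + d 1) with hf'def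
  have hsum : (∑ j, MvPolynomial.coeff (↑(e.symm j)) P
        * p.1 ^ (2 * ((e.symm j : Fin 2 →₀ ℕ)) 1 + ((e.symm j : Fin 2 →₀ ℕ)) 0)
        * p.2 ^ (2 * ((e.symm j : Fin 2 →₀ ℕ)) 0 + ((e.symm j : Fin 2 →₀ ℕ)) 1))
      = (a : C(Y, ℝ)) y := by
    rw [haev, MvPolynomial.eval_eq']
    calc (∑ j, f' ↑(e.symm j))
        = ∑ d : ↥P.support, f' ↑d := Equiv.sum_comp e.symm (fun d => f' ↑d)
      _ = ∑ d ∈ P.support, f' d := Finset.sum_coe_sort P.support f'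
      _ = ∑ d ∈ P.support, MvPolynomial.coeff d P * ∏ i, (v i) y ^ d i := by
          refine Finset.sum_congr rfl fun d _ => ?_
          rw [Fin.prod_univ_two, hf'def]
          simp only [hvdef, Matrix.cons_val_zero, Matrix.cons_val_one, Matrix.head_cons,
            ContinuousMap.coe_mk, hyc1, hyc2]
          ring
  rw [hfp, hsum]
  have hb : |G y - (a : C(Y, ℝ)) y| ≤ ‖(a : C(Y, ℝ)) - G‖ := by
    rw [abs_sub_comm]
    simpa using ContinuousMap.norm_coe_le_norm ((a : C(Y, ℝ)) - G) y
  calc |G y - (a : C(Y, ℝ)) y| ≤ ‖(a : C(Y, ℝ)) - G‖ := hb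
    _ < ε / 2 := ha
    _ < ε := by linarith
end
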